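/- arXiv:2009.09113 — 6 statements merged into one kernel-verified Lean document; each statement's English description precedes it below -/
import Mathlib

section
/- Every locally finite Borel graph 𝒢 = (V, E, 𝓑) admits a Borel proper colouring c : V → ω, i.e. a map with Borel colour classes such that adjacent vertices receive different colours. -/
open Set Function PolishSpace PiNat TopologicalSpace MeasureTheory

namespace NovikovSep

variable {α : Type*}

/-- A countable family of sets is *measurably separated* if there are measurable supersets
with empty intersection. -/
def SepFam [MeasurableSpace α] (u : ℕ → Set α) : Prop :=
  ∃ B : ℕ → Set α, (∀ n, u n ⊆ B n) ∧ (∀ n, MeasurableSet (B n)) ∧ (⋂ n, B n) = ∅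

theorem SepFam.mono [MeasurableSpace α] {u v : ℕ → Set α} (h : SepFam v) (huv : ∀ n, u n ⊆ v n) :
    SepFam u := by
  obtain ⟨B, h1, h2, h3⟩ := h
  exact ⟨B, fun n => (huv n).trans (h1 n), h2, h3⟩

theorem sepFam_update_iUnion [MeasurableSpace α] {u : ℕ → Set α} {N : ℕ} {v : ℕ → Set α}
    (hN : u N ⊆ ⋃ i, v i) (h : ∀ i, SepFam (Function.update u N (v i))) : SepFam u := by
  choose B hB1 hB2 hB3 using h
  refine ⟨fun n => if n = N then ⋃ i, B i N else ⋂ i, B i n, ?_, ?_, ?_⟩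
  · intro n
    dsimp only
    by_cases hn : n = N
    · rw [hn, if_pos rfl]
      refine hN.trans (iUnion_subset fun i => ?_)
      have := hB1 i N
      rw [Function.update_self] at this
      exact this.trans (subset_iUnion (fun j => B j N) i)
    · simp only [if_neg hn]
      refine subset_iInter fun i => ?_
      have := hB1 i n
      rwa [Function.update_of_ne hn] at this
  · intro n
    dsimp only
    by_cases hn : n = N
    · simp only [hn, if_pos rfl]
      exact MeasurableSet.iUnion fun i => hB2 i N
    · simp only [if_neg hn]
      exact MeasurableSet.iInter fun i => hB2 i n
  · ext x
    simp only [mem_iInter, mem_empty_iff_false, iff_false]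
    intro hx
    have hxN := hx N
    simp only [if_pos rfl] at hxN
    obtain ⟨i, hi⟩ := mem_iUnion.1 hxN
    have : x ∈ ⋂ n, B i n := by
      refine mem_iInter.2 fun n => ?_
      by_cases hn : n = N
      · subst hn; exact hi
      · have := hx n
        simp only [if_neg hn] at this
        exact mem_iInter.1 this i
    rw [hB3 i] at this
    exact this


theorem sepFam_ranges [TopologicalSpace α] [T2Space α] [MeasurableSpace α]
    [OpensMeasurableSpace α] {f : ℕ → (ℕ → ℕ) → α} (hf : ∀ n, Continuous (f n))
    (hdisj : (⋂ n, range (f n)) = ∅) : SepFam fun n => range (f n) := by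
  by_contra hsep
  have I : ∀ (b : ℕ → ℕ → ℕ) (l : ℕ → ℕ) (N : ℕ),
      ¬ SepFam (fun n => f n '' cylinder (b n) (l n)) →
      ∃ x', x' ∈ cylinder (b N) (l N) ∧
        ¬ SepFam (fun n => f n '' cylinder (Function.update b N x' n)
          (Function.update l N (l N + 1) n)) := by
    intro b l N
    contrapose!
    intro H
    refine sepFam_update_iUnion (N := N)
      (v := fun i => f N '' cylinder (Function.update (b N) (l N) i) (l N + 1)) ?_ ?_
    · rw [← image_iUnion, iUnion_cylinder_update (b N) (l N)]
    · intro i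
      have hfun : Function.update (fun n => f n '' cylinder (b n) (l n)) N
          (f N '' cylinder (Function.update (b N) (l N) i) (l N + 1))
          = fun n => f n '' cylinder
              (Function.update b N (Function.update (b N) (l N) i) n)
              (Function.update l N (l N + 1) n) := by
        funext n
        by_cases hn : n = N
        · subst hn; simp
        · simp [Function.update_of_ne hn]
      rw [hfun]
      exact H _ (update_mem_cylinder _ _ _)
  let A := {q : (ℕ → ℕ → ℕ) × (ℕ → ℕ) // ¬ SepFam (fun n => f n '' cylinder (q.1 n) (q.2 n))}
  have step : ∀ (p : A) (N : ℕ), ∃ q : A,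
      (∀ n, n ≠ N → q.1.1 n = p.1.1 n) ∧ (∀ n, n ≠ N → q.1.2 n = p.1.2 n) ∧
      q.1.2 N = p.1.2 N + 1 ∧ q.1.1 N ∈ cylinder (p.1.1 N) (p.1.2 N) := by
    rintro ⟨⟨b, l⟩, hp⟩ N
    rcases I b l N hp with ⟨x', hx'mem, hx'⟩
    refine ⟨⟨⟨Function.update b N x', Function.update l N (l N + 1)⟩, hx'⟩,
      fun n hn => Function.update_of_ne hn _ _, fun n hn => Function.update_of_ne hn _ _,
      Function.update_self _ _ _, ?_⟩
    simpa [Function.update_self] using hx'mem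
  choose F hF1 hF2 hF3 hF4 using step
  have h0 : ¬ SepFam (fun n => f n ''
      cylinder ((fun (_ : ℕ) (_ : ℕ) => 0) n) ((fun (_ : ℕ) => (0 : ℕ)) n)) := by
    simpa [cylinder_zero, image_univ] using hsep
  let p0 : A := ⟨⟨fun _ _ => 0, fun _ => 0⟩, h0⟩
  let p : ℕ → A := fun k => Nat.rec p0 (fun k pk => F pk (Nat.unpair k).1) k
  have prec : ∀ k, p (k + 1) = F (p k) (Nat.unpair k).1 := fun _ => rfl
  let b : ℕ → ℕ → ℕ → ℕ := fun k => (p k).1.1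
  let l : ℕ → ℕ → ℕ := fun k => (p k).1.2
  have hl_succ : ∀ k n, l (k + 1) n = if n = (Nat.unpair k).1 then l k n + 1 else l k n := by
    intro k n
    by_cases hn : n = (Nat.unpair k).1
    · rw [if_pos hn, hn]
      show (p (k+1)).1.2 _ = _
      rw [prec k]
      exact hF3 (p k) _
    · rw [if_neg hn]
      show (p (k+1)).1.2 _ = _
      rw [prec k]
      exact hF2 (p k) _ n hn
  have lmono : ∀ n, Monotone fun k => l k n := by
    intro n
    apply monotone_nat_of_le_succ
    intro k
    rw [hl_succ k n]
    split <;> omega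
  have lunb : ∀ n m, ∃ k, m ≤ l k n := by
    intro n m
    induction m with
    | zero => exact ⟨0, Nat.zero_le _⟩
    | succ m ih =>
      obtain ⟨k, hk⟩ := ih
      refine ⟨Nat.pair n k + 1, ?_⟩
      rw [hl_succ, Nat.unpair_pair, if_pos rfl]
      have : l k n ≤ l (Nat.pair n k) n := lmono n (Nat.right_le_pair n k)
      omega
  have bstab : ∀ k n j, j < l k n → b (k + 1) n j = b k n j := by
    intro k n j hj
    by_cases hn : n = (Nat.unpair k).1
    · have : b (k + 1) n ∈ cylinder (b k n) (l k n) := by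
        show (p (k+1)).1.1 n ∈ cylinder ((p k).1.1 n) ((p k).1.2 n)
        rw [prec k, hn]
        exact hF4 (p k) _
      exact mem_cylinder_iff.1 this j hj
    · show (p (k+1)).1.1 n j = _
      rw [prec k, hF1 (p k) _ n hn]
  have bstab' : ∀ k k', k ≤ k' → ∀ n j, j < l k n → b k' n j = b k n j := by
    intro k k' hkk'
    induction k', hkk' using Nat.le_induction with
    | base => intro n j _; rfl
    | succ k' hkk' ih =>
      intro n j hj
      rw [bstab k' n j (lt_of_lt_of_le hj (lmono n hkk')), ih n j hj]
  let y : ℕ → ℕ → ℕ := fun n j => b (lunb n (j + 1)).choose n j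
  have ylim : ∀ k n j, j < l k n → y n j = b k n j := by
    intro k n j hj
    have hk0 : j + 1 ≤ l (lunb n (j + 1)).choose n := (lunb n (j + 1)).choose_spec
    have h1 := bstab' _ (max (lunb n (j + 1)).choose k) (le_max_left _ _) n j hk0
    have h2 := bstab' _ (max (lunb n (j + 1)).choose k) (le_max_right _ _) n j hj
    show b (lunb n (j + 1)).choose n j = b k n j
    rw [← h1, h2]
  have hPne : ∃ a c : ℕ, f a (y a) ≠ f c (y c) := by
    by_contra hcon
    push_neg at hcon
    have : f 0 (y 0) ∈ ⋂ n, range (f n) :=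
      mem_iInter.2 fun n => ⟨y n, hcon n 0⟩
    rw [hdisj] at this
    exact this
  obtain ⟨a, c, hac⟩ := hPne
  have hane : a ≠ c := fun h => hac (by rw [h])
  obtain ⟨u, v, u_open, v_open, xu, yv, huv⟩ := t2_separation hac
  letI : MetricSpace (ℕ → ℕ) := metricSpaceNatNat
  obtain ⟨εa, εapos, hεa⟩ : ∃ εa : ℝ, εa > 0 ∧ Metric.ball (y a) εa ⊆ f a ⁻¹' u := by
    apply Metric.mem_nhds_iff.1
    exact (hf a).continuousAt.preimage_mem_nhds (u_open.mem_nhds xu)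
  obtain ⟨εc, εcpos, hεc⟩ : ∃ εc : ℝ, εc > 0 ∧ Metric.ball (y c) εc ⊆ f c ⁻¹' v := by
    apply Metric.mem_nhds_iff.1
    exact (hf c).continuousAt.preimage_mem_nhds (v_open.mem_nhds yv)
  obtain ⟨m, hm⟩ : ∃ m : ℕ, (1 / 2 : ℝ) ^ m < min εa εc :=
    exists_pow_lt_of_lt_one (lt_min εapos εcpos) (by norm_num)
  obtain ⟨k1, hk1⟩ := lunb a m
  obtain ⟨k2, hk2⟩ := lunb c m
  set k := max k1 k2 with hk
  have hka : m ≤ l k a := le_trans hk1 (lmono a (le_max_left _ _))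
  have hkc : m ≤ l k c := le_trans hk2 (lmono c (le_max_right _ _))
  have himg : ∀ (n : ℕ) (w : Set α), f n (y n) ∈ w → IsOpen w →
      (∀ ε : ℝ, ε > 0 → Metric.ball (y n) ε ⊆ f n ⁻¹' w → (1 / 2 : ℝ) ^ l k n < ε →
      f n '' cylinder (b k n) (l k n) ⊆ w) := by
    intro n w _ _ ε _ hball hε
    rintro - ⟨z, hz, rfl⟩
    apply hball
    rw [Metric.mem_ball]
    have hzy : z ∈ cylinder (y n) (l k n) := by
      rw [mem_cylinder_iff]
      intro i hi
      rw [mem_cylinder_iff.1 hz i hi, ← ylim k n i hi]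
    calc dist z (y n) ≤ (1 / 2 : ℝ) ^ l k n := mem_cylinder_iff_dist_le.1 hzy
    _ < ε := hε
  have hsepk : SepFam (fun n => f n '' cylinder (b k n) (l k n)) := by
    refine ⟨fun n => if n = a then u else if n = c then v else univ, ?_, ?_, ?_⟩
    · intro n
      dsimp only
      by_cases hna : n = a
      · subst hna
        rw [if_pos rfl]
        refine himg n u xu u_open εa εapos hεa ?_
        calc (1 / 2 : ℝ) ^ l k n ≤ (1 / 2 : ℝ) ^ m :=
              pow_le_pow_of_le_one (by norm_num) (by norm_num) hka
        _ < εa := lt_of_lt_of_le hm (min_le_left _ _)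
      · rw [if_neg hna]
        by_cases hnc : n = c
        · subst hnc
          rw [if_pos rfl]
          refine himg n v yv v_open εc εcpos hεc ?_
          calc (1 / 2 : ℝ) ^ l k n ≤ (1 / 2 : ℝ) ^ m :=
                pow_le_pow_of_le_one (by norm_num) (by norm_num) hkc
          _ < εc := lt_of_lt_of_le hm (min_le_right _ _)
        · rw [if_neg hnc]
          exact subset_univ _
    · intro n
      dsimp only
      split
      · exact u_open.measurableSet
      · split
        · exact v_open.measurableSet
        · exact MeasurableSet.univ
    · ext x
      simp only [mem_iInter, mem_empty_iff_false, iff_false]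
      intro hx
      have hxa := hx a
      rw [if_pos rfl] at hxa
      have hxc := hx c
      rw [if_neg (Ne.symm hane), if_pos rfl] at hxc
      exact (disjoint_left.1 huv) hxa hxc
  exact (p k).2 hsepk

/-- **Novikov's countable separation theorem**: countably many analytic sets with empty
intersection can be enlarged to Borel sets with empty intersection. -/
theorem novikov [TopologicalSpace α] [T2Space α] [MeasurableSpace α]
    [OpensMeasurableSpace α] {s : ℕ → Set α} (hs : ∀ n, AnalyticSet (s n))
    (h : (⋂ n, s n) = ∅) :
    ∃ B : ℕ → Set α, (∀ n, s n ⊆ B n) ∧ (∀ n, MeasurableSet (B n)) ∧ (⋂ n, B n) = ∅ := by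
  by_cases he : ∃ N, s N = ∅
  · obtain ⟨N, hN⟩ := he
    refine ⟨fun n => if n = N then ∅ else univ, ?_, ?_, ?_⟩
    · intro n
      dsimp only
      split
      · next hn => rw [hn, hN]
      · exact subset_univ _
    · intro n
      dsimp only
      split
      · exact MeasurableSet.empty
      · exact MeasurableSet.univ
    · refine eq_empty_of_subset_empty ?_
      intro x hx
      have := mem_iInter.1 hx N
      rwa [if_pos rfl] at this
  · push_neg at he
    have hex : ∀ n, ∃ g : (ℕ → ℕ) → α, Continuous g ∧ range g = s n := by
      intro n
      have hn := hs n
      rw [AnalyticSet] at hn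
      rcases hn with h0 | ⟨g, hg, hrg⟩
      · exact absurd h0 (he n).ne_empty
      · exact ⟨g, hg, hrg⟩
    choose g hg1 hg2 using hex
    have hd : (⋂ n, range (g n)) = ∅ := by
      simp_rw [hg2]; exact h
    obtain ⟨B, hB1, hB2, hB3⟩ := sepFam_ranges hg1 hd
    exact ⟨B, fun n => (hg2 n) ▸ hB1 n, hB2, hB3⟩

end NovikovSep


open NovikovSep in
/-- Every locally finite Borel graph admits a Borel proper colouring `c : V → ℕ`. -/
theorem stmt_9 {V : Type*} [MeasurableSpace V] [StandardBorelSpace V]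
    (G : SimpleGraph V) (hlf : ∀ x : V, (G.neighborSet x).Finite)
    (hE : MeasurableSet {p : V × V | G.Adj p.1 p.2}) :
    ∃ c : V → ℕ, Measurable c ∧ ∀ x y : V, G.Adj x y → c x ≠ c y := by
  classical
  letI := upgradeStandardBorel V
  obtain ⟨h, hemb⟩ := exists_measurableEmbedding_real V
  obtain ⟨e, he⟩ := exists_surjective_nat (ℚ × ℚ)
  -- the countable family of "rational interval" preimages
  set A : ℕ → Set V := fun n =>
    h ⁻¹' Set.Ioo ((e n).1 : ℝ) ((e n).2 : ℝ) with hA_def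
  have hA : ∀ n, MeasurableSet (A n) := fun n => hemb.measurable measurableSet_Ioo
  -- every point is separated from its (finitely many) neighbours by some `A n`
  have hsepnbr : ∀ x : V, ∃ n, x ∈ A n ∧ ∀ y, G.Adj x y → y ∉ A n := by
    intro x
    set F : Set ℝ := h '' G.neighborSet x with hF_def
    have hFfin : F.Finite := (hlf x).image h
    have hxF : h x ∉ F := by
      rintro ⟨y, hy, hyx⟩
      exact G.irrefl (hemb.injective hyx ▸ hy)
    -- find a positive distance from `h x` to `F`
    obtain ⟨ε, hεpos, hεF⟩ : ∃ ε : ℝ, 0 < ε ∧ ∀ w ∈ F, ε ≤ |w - h x| := by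
      set s : Finset ℝ := insert 1 (hFfin.toFinset.image fun w => |w - h x|) with hs_def
      have hsne : s.Nonempty := ⟨1, Finset.mem_insert_self _ _⟩
      refine ⟨s.min' hsne, ?_, ?_⟩
      · have : ∀ z ∈ s, 0 < z := by
          intro z hz
          rcases Finset.mem_insert.1 hz with rfl | hz
          · norm_num
          · obtain ⟨w, hw, rfl⟩ := Finset.mem_image.1 hz
            rw [Set.Finite.mem_toFinset] at hw
            have : w ≠ h x := fun hwx => hxF (hwx ▸ hw)
            simpa [abs_pos, sub_eq_zero] using this
        exact this _ (s.min'_mem hsne)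
      · intro w hw
        apply Finset.min'_le
        exact Finset.mem_insert_of_mem (Finset.mem_image.2 ⟨w, (Set.Finite.mem_toFinset _).2 hw, rfl⟩)
    obtain ⟨q, hq1, hq2⟩ := exists_rat_btwn (show h x - ε < h x by linarith)
    obtain ⟨r, hr1, hr2⟩ := exists_rat_btwn (show h x < h x + ε by linarith)
    obtain ⟨n, hn⟩ := he (q, r)
    refine ⟨n, ?_, ?_⟩
    · simp only [hA_def, hn, Set.mem_preimage, Set.mem_Ioo]
      exact ⟨hq2, hr1⟩
    · intro y hy hymem
      simp only [hA_def, hn, Set.mem_preimage, Set.mem_Ioo] at hymem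
      have hyF : h y ∈ F := ⟨y, hy, rfl⟩
      have habs := hεF _ hyF
      have hlt : |h y - h x| < ε := by
        rw [abs_sub_lt_iff]
        constructor <;> [linarith [hymem.2]; linarith [hymem.1]]
      linarith
  -- the analytic sets for Novikov separation
  set S : ℕ → Set V := fun n =>
    Prod.fst '' ({p : V × V | G.Adj p.1 p.2} ∩ (Prod.snd ⁻¹' A n)) with hS_def
  set T : ℕ → Set V := fun n => (A n)ᶜ ∪ S n with hT_def
  have hTanal : ∀ n, MeasureTheory.AnalyticSet (T n) := by
    intro n
    show MeasureTheory.AnalyticSet ((A n)ᶜ ∪ S n)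
    rw [Set.union_eq_iUnion]
    apply MeasureTheory.AnalyticSet.iUnion
    intro b
    cases b
    · -- cond false = S n
      show MeasureTheory.AnalyticSet (S n)
      have hms : MeasurableSet ({p : V × V | G.Adj p.1 p.2} ∩ (Prod.snd ⁻¹' A n)) :=
        hE.inter (measurable_snd (hA n))
      exact hms.analyticSet.image_of_continuous continuous_fst
    · exact ((hA n).compl).analyticSet
  have hTempty : (⋂ n, T n) = ∅ := by
    refine Set.eq_empty_of_subset_empty fun x hx => ?_
    obtain ⟨n, hxA, hxN⟩ := hsepnbr x
    have hxT : x ∈ T n := Set.mem_iInter.1 hx n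
    rcases hxT with hxc | hxS
    · exact hxc hxA
    · obtain ⟨p, ⟨hpadj, hpA⟩, hpfst⟩ := hxS
      exact hxN p.2 (hpfst ▸ hpadj) hpA
  obtain ⟨Q, hQ1, hQ2, hQ3⟩ := NovikovSep.novikov hTanal hTempty
  set C : ℕ → Set V := fun n => A n \ Q n with hC_def
  have hCmeas : ∀ n, MeasurableSet (C n) := fun n => (hA n).diff (hQ2 n)
  have hcov : ∀ x : V, ∃ n, x ∈ C n := by
    intro x
    have : x ∉ ⋂ n, Q n := by rw [hQ3]; exact Set.notMem_empty x
    obtain ⟨n, hn⟩ := by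
      simpa only [Set.mem_iInter, not_forall] using this
    refine ⟨n, ?_, hn⟩
    by_contra hxA
    exact hn (hQ1 n (Set.mem_union_left _ hxA))
  have hind : ∀ n x y, G.Adj x y → x ∈ C n → y ∈ C n → False := by
    intro n x y hxy hxC hyC
    have hxS : x ∈ S n := ⟨(x, y), ⟨hxy, hyC.1⟩, rfl⟩
    exact hxC.2 (hQ1 n (Set.mem_union_right _ hxS))
  refine ⟨fun x => Nat.find (hcov x), ?_, ?_⟩
  · apply measurable_to_countable'
    intro k
    have : (fun x => Nat.find (hcov x)) ⁻¹' {k}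
        = C k ∩ ⋂ j, ⋂ _ : j < k, (C j)ᶜ := by
      ext x
      simp only [Set.mem_preimage, Set.mem_singleton_iff, Nat.find_eq_iff, Set.mem_inter_iff,
        Set.mem_iInter, Set.mem_compl_iff]
    rw [this]
    exact (hCmeas k).inter (MeasurableSet.iInter fun j =>
      MeasurableSet.iInter fun _ => (hCmeas j).compl)
  · intro x y hxy hcxy
    have hx := Nat.find_spec (hcov x)
    have hy := Nat.find_spec (hcov y)
    have hcxy' : Nat.find (hcov x) = Nat.find (hcov y) := hcxy
    rw [hcxy'] at hx
    exact hind _ _ _ hxy hx hy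
end

section
/- Every Borel graph 𝒢 = (V, E, 𝓑) with finite maximum degree d satisfies χ_B(𝒢) ≤ d + 1, i.e. there is a Borel proper colouring c : V → {0, …, d}. -/
open Set Function

/-- Projection lemma: a Borel subset of `V × V` all of whose vertical sections are finite
of cardinality at most `d` has Borel first projection. -/
theorem proj_meas_aux {V : Type*} [MeasurableSpace V] [StandardBorelSpace V]
    (f : V → ℝ) (hf : Measurable f) (hfi : Function.Injective f) :
    ∀ (d : ℕ) (B : Set (V × V)), MeasurableSet B →
      (∀ x, {y | (x, y) ∈ B}.Finite) → (∀ x, {y | (x, y) ∈ B}.ncard ≤ d) →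
      MeasurableSet {x | ∃ y, (x, y) ∈ B} := by
  intro d
  induction d with
  | zero =>
    intro B hB hfin hcard
    have h : {x | ∃ y, (x, y) ∈ B} = ∅ := by
      ext x
      simp only [mem_empty_iff_false, iff_false, mem_setOf_eq, not_exists]
      intro y hy
      have := hcard x
      have h0 : {y | (x, y) ∈ B} = ∅ :=
        (Set.ncard_eq_zero (hfin x)).mp (le_antisymm this (Nat.zero_le _))
      have : y ∈ ({y | (x, y) ∈ B} : Set V) := hy
      rw [h0] at this
      exact this
    rw [h]; exact MeasurableSet.empty
  | succ d ih =>
    intro B hB hfin hcard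
    set T : Set (V × (Fin (d + 1) → V)) :=
      {p | StrictMono (fun i => f (p.2 i)) ∧ ∀ i, (p.1, p.2 i) ∈ B} with hTdef
    have hT : MeasurableSet T := by
      have h1 : MeasurableSet {p : V × (Fin (d+1) → V) | StrictMono (fun i => f (p.2 i))} := by
        have : {p : V × (Fin (d+1) → V) | StrictMono (fun i => f (p.2 i))} =
            ⋂ (i : Fin (d+1)) (j : Fin (d+1)) (_ : i < j), {p | f (p.2 i) < f (p.2 j)} := by
          ext p
          simp only [mem_setOf_eq, mem_iInter]
          constructor
          · intro h i j hij; exact h hij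
          · intro h a b hab; exact h a b hab
        rw [this]
        refine MeasurableSet.iInter fun i => MeasurableSet.iInter fun j =>
          MeasurableSet.iInter fun _ => ?_
        exact measurableSet_lt ((hf.comp ((measurable_pi_apply i).comp measurable_snd)))
          ((hf.comp ((measurable_pi_apply j).comp measurable_snd)))
      have h2 : MeasurableSet {p : V × (Fin (d+1) → V) | ∀ i, (p.1, p.2 i) ∈ B} := by
        have : {p : V × (Fin (d+1) → V) | ∀ i, (p.1, p.2 i) ∈ B} =
            ⋂ (i : Fin (d+1)), (fun p : V × (Fin (d+1) → V) => (p.1, p.2 i)) ⁻¹' B := by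
          ext p; simp [Set.mem_iInter, Set.mem_preimage]
        rw [this]
        exact MeasurableSet.iInter fun i =>
          (measurable_fst.prodMk ((measurable_pi_apply i).comp measurable_snd)) hB
      exact h1.inter h2
    have hinj : InjOn Prod.fst T := by
      rintro ⟨x, y⟩ hxy ⟨x', y'⟩ hxy' (h : x = x')
      subst h
      obtain ⟨hm, hmem⟩ := hxy
      obtain ⟨hm', hmem'⟩ := hxy'
      -- ranges of y and y' both equal the section
      have hyinj : Function.Injective y := fun a b hab => hm.injective (congrArg f hab)
      have hyinj' : Function.Injective y' := fun a b hab => hm'.injective (congrArg f hab)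
      have hsub : range y ⊆ {z | (x, z) ∈ B} := by rintro _ ⟨i, rfl⟩; exact hmem i
      have hsub' : range y' ⊆ {z | (x, z) ∈ B} := by rintro _ ⟨i, rfl⟩; exact hmem' i
      have hcardy : (range y).ncard = d + 1 := by
        rw [← Set.image_univ, Set.ncard_image_of_injective _ hyinj, Set.ncard_univ,
          Nat.card_eq_fintype_card, Fintype.card_fin]
      have hcardy' : (range y').ncard = d + 1 := by
        rw [← Set.image_univ, Set.ncard_image_of_injective _ hyinj', Set.ncard_univ,
          Nat.card_eq_fintype_card, Fintype.card_fin]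
      have hry : range y = {z | (x, z) ∈ B} :=
        Set.eq_of_subset_of_ncard_le hsub (by rw [hcardy]; exact hcard x) (hfin x)
      have hry' : range y' = {z | (x, z) ∈ B} :=
        Set.eq_of_subset_of_ncard_le hsub' (by rw [hcardy']; exact hcard x) (hfin x)
      have hrange : range (fun i => f (y i)) = range (fun i => f (y' i)) := by
        have : ∀ g : Fin (d+1) → V, range (fun i => f (g i)) = f '' range g := by
          intro g; rw [← Set.range_comp]; rfl
        rw [this, this, hry, hry']
      haveI : WellFoundedLT (Fin (d+1)) := Finite.to_wellFoundedLT
      have := (StrictMono.range_inj hm hm').1 hrange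
      have hyy : y = y' := by
        funext i
        exact hfi (congrFun this i)
      rw [hyy]
    have hS : MeasurableSet (Prod.fst '' T) :=
      hT.image_of_measurable_injOn measurable_fst hinj
    set S := Prod.fst '' T with hSdef
    have hkey : ∀ x, x ∉ S → {y | (x, y) ∈ B}.ncard ≤ d := by
      intro x hx
      by_contra hgt
      push_neg at hgt
      have hcx : {y | (x, y) ∈ B}.ncard = d + 1 :=
        le_antisymm (hcard x) hgt
      -- build a strictly monotone enumeration
      have hfinx := hfin x
      -- f '' section is a finite set of reals with d+1 elements
      have himg : (f '' {y | (x, y) ∈ B}).ncard = d + 1 := by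
        rw [Set.ncard_image_of_injective _ hfi, hcx]
      have himgfin : (f '' {y | (x, y) ∈ B}).Finite := hfinx.image f
      set s : Finset ℝ := himgfin.toFinset with hs
      have hscard : s.card = d + 1 := by
        rw [← himg, Set.ncard_eq_toFinset_card _ himgfin]
      -- orderIsoOfFin
      set e : Fin (d+1) → ℝ := fun i => (s.orderIsoOfFin hscard i : ℝ) with hedef
      have hemono : StrictMono e := fun i j hij => by
        exact_mod_cast (s.orderIsoOfFin hscard).strictMono hij
      -- choose preimages
      have hch : ∀ i : Fin (d+1), ∃ z, (x, z) ∈ B ∧ f z = (e i : ℝ) := by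
        intro i
        have : e i ∈ f '' {y | (x, y) ∈ B} := by
          have h2 : e i ∈ s := (s.orderIsoOfFin hscard i).2
          exact himgfin.mem_toFinset.mp h2
        obtain ⟨z, hz, hz2⟩ := this
        exact ⟨z, hz, hz2⟩
      choose yy hyy1 hyy2 using hch
      apply hx
      refine ⟨(x, yy), ⟨?_, fun i => hyy1 i⟩, rfl⟩
      intro i j hij
      show f (yy i) < f (yy j)
      rw [hyy2, hyy2]
      exact hemono hij
    -- restrict B away from S, apply IH
    set B' := B ∩ {p : V × V | p.1 ∉ S} with hB'def
    have hB' : MeasurableSet B' := hB.inter (hS.compl.preimage measurable_fst)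
    have hfin' : ∀ x, {y | (x, y) ∈ B'}.Finite := fun x =>
      (hfin x).subset (fun y hy => hy.1)
    have hcard' : ∀ x, {y | (x, y) ∈ B'}.ncard ≤ d := by
      intro x
      by_cases hx : x ∈ S
      · have : {y | (x, y) ∈ B'} = ∅ := by
          ext y; simp only [mem_setOf_eq, hB'def, Set.mem_inter_iff, mem_empty_iff_false,
            iff_false, not_and]
          intro _; simpa using hx
        simp [this]
      · exact le_trans (Set.ncard_le_ncard (fun y hy => hy.1) (hfin x)) (hkey x hx)
    have hproj' := ih B' hB' hfin' hcard'
    have hrw : {x | ∃ y, (x, y) ∈ B} = S ∪ {x | ∃ y, (x, y) ∈ B'} := by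
      ext x
      simp only [mem_setOf_eq, Set.mem_union]
      constructor
      · intro ⟨y, hy⟩
        by_cases hx : x ∈ S
        · exact Or.inl hx
        · exact Or.inr ⟨y, hy, hx⟩
      · rintro (hx | ⟨y, hy, _⟩)
        · obtain ⟨⟨x', yy⟩, ⟨_, hmem⟩, rfl⟩ := hx
          exact ⟨yy 0, hmem 0⟩
        · exact ⟨y, hy⟩
    rw [hrw]
    exact hS.union hproj'

open Set Function

/-- Separating a real from a finite set of reals by a rational interval. -/
theorem rat_sep_aux (c : ℝ) (s : Finset ℝ) :
    c ∉ s → ∃ q r : ℚ, (q : ℝ) < c ∧ c < (r : ℝ) ∧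
      ∀ a ∈ s, ¬((q : ℝ) < a ∧ a < (r : ℝ)) := by
  induction s using Finset.induction_on with
  | empty =>
    intro _
    obtain ⟨q, hq⟩ := exists_rat_btwn (sub_one_lt c)
    obtain ⟨r, hr⟩ := exists_rat_btwn (lt_add_one c)
    exact ⟨q, r, hq.2, hr.1, by simp⟩
  | @insert a s ha ih =>
    intro hc
    have hcs : c ∉ s := fun h => hc (Finset.mem_insert_of_mem h)
    obtain ⟨q, r, hq, hr, hsep⟩ := ih hcs
    have hac : a ≠ c := fun h => hc (h ▸ Finset.mem_insert_self a s)
    rcases lt_or_gt_of_ne hac with h | h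
    · obtain ⟨q', hq'⟩ := exists_rat_btwn (show max a (q : ℝ) < c from max_lt h hq)
      refine ⟨q', r, hq'.2, hr, ?_⟩
      rintro b hb ⟨h1, h2⟩
      rcases Finset.mem_insert.mp hb with rfl | hbs
      · exact absurd h1 (not_lt.mpr (le_trans (le_max_left _ _) hq'.1.le))
      · exact hsep b hbs ⟨lt_trans (lt_of_le_of_lt (le_max_right (a : ℝ) q) hq'.1) h1, h2⟩
    · obtain ⟨r', hr'⟩ := exists_rat_btwn (show c < min a (r : ℝ) from lt_min h hr)
      refine ⟨q, r', hq, hr'.1, ?_⟩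
      rintro b hb ⟨h1, h2⟩
      rcases Finset.mem_insert.mp hb with rfl | hbs
      · exact absurd h2 (not_lt.mpr (le_trans hr'.2.le (min_le_left _ _)))
      · exact hsep b hbs ⟨h1, lt_trans h2 (lt_of_lt_of_le hr'.2 (min_le_right (a : ℝ) r))⟩

/-- The stage-wise greedy colouring: at stage `n + 1`, every vertex `x` with `c₀ x = n`
receives colour `free g x + 1` where `g` is the colouring built so far
(`0` means "not yet coloured"). -/
def stageCol {V : Type*} (c₀ : V → ℕ) (free : (V → ℕ) → V → ℕ) : ℕ → V → ℕ
  | 0 => fun _ => 0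
  | n + 1 => fun x =>
      if c₀ x = n then free (stageCol c₀ free n) x + 1 else stageCol c₀ free n x

/-- Every Borel graph with maximum degree at most `d` has a Borel proper colouring
with `d + 1` colours. -/
theorem stmt_11 {V : Type*} [MeasurableSpace V] [StandardBorelSpace V]
    (G : SimpleGraph V) (d : ℕ)
    (hlf : ∀ x : V, (G.neighborSet x).Finite)
    (hdeg : ∀ x : V, (G.neighborSet x).ncard ≤ d)
    (hE : MeasurableSet {p : V × V | G.Adj p.1 p.2}) :
    ∃ c : V → Fin (d + 1), Measurable c ∧ ∀ x y : V, G.Adj x y → c x ≠ c y := by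
  classical
  obtain ⟨f, hfemb⟩ := MeasureTheory.exists_measurableEmbedding_real V
  -- the projection lemma, specialised to subsets of the edge set
  have projL : ∀ B : Set (V × V), MeasurableSet B → B ⊆ {p : V × V | G.Adj p.1 p.2} →
      MeasurableSet {x | ∃ y, (x, y) ∈ B} := by
    intro B hB hsub
    refine proj_meas_aux f hfemb.measurable hfemb.injective d B hB ?_ ?_
    · intro x
      exact (hlf x).subset fun y hy => hsub hy
    · intro x
      exact le_trans (Set.ncard_le_ncard (fun y hy => hsub hy) (hlf x)) (hdeg x)
  -- the basic rational-interval sets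
  set e : ℕ ≃ ℚ × ℚ := (Denumerable.eqv (ℚ × ℚ)).symm with hedef
  set A : ℕ → Set V := fun n =>
    f ⁻¹' (Set.Ioo ((e n).1 : ℝ) ((e n).2 : ℝ)) with hAdef
  have hA : ∀ n, MeasurableSet (A n) := fun n => hfemb.measurable measurableSet_Ioo
  -- every vertex has a basic set containing it and none of its neighbours
  have hexA : ∀ x : V, ∃ n, x ∈ A n ∧ ∀ y, G.Adj x y → y ∉ A n := by
    intro x
    have himgfin : (f '' G.neighborSet x).Finite := (hlf x).image f
    have hcs : f x ∉ himgfin.toFinset := by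
      rw [Set.Finite.mem_toFinset]
      rintro ⟨y, hy, hfy⟩
      have : y = x := hfemb.injective hfy
      rw [this] at hy
      exact G.irrefl hy
    obtain ⟨q, r, hq, hr, hsep⟩ := rat_sep_aux (f x) himgfin.toFinset hcs
    have hee : e (e.symm (q, r)) = (q, r) := e.apply_symm_apply _
    refine ⟨e.symm (q, r), ?_, ?_⟩
    · show f x ∈ Set.Ioo ((e (e.symm (q, r))).1 : ℝ) ((e (e.symm (q, r))).2 : ℝ)
      rw [hee]
      exact ⟨hq, hr⟩
    · intro y hxy hy
      have hy' : f y ∈ Set.Ioo ((e (e.symm (q, r))).1 : ℝ) ((e (e.symm (q, r))).2 : ℝ) := hy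
      rw [hee] at hy'
      exact hsep (f y) (himgfin.mem_toFinset.mpr ⟨y, hxy, rfl⟩) ⟨hy'.1, hy'.2⟩
  -- the countable Borel colouring
  set c₀ : V → ℕ := fun x => Nat.find (hexA x) with hc₀def
  have hc₀spec : ∀ x, x ∈ A (c₀ x) ∧ ∀ y, G.Adj x y → y ∉ A (c₀ x) :=
    fun x => Nat.find_spec (hexA x)
  have hc₀proper : ∀ x y, G.Adj x y → c₀ x ≠ c₀ y := by
    intro x y hxy h
    have h1 := (hc₀spec x).2 y hxy
    have h2 := (hc₀spec y).1
    rw [← h] at h2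
    exact h1 h2
  -- measurability of the countable colouring
  have hDN : ∀ n, MeasurableSet {x | ∃ y, G.Adj x y ∧ y ∈ A n} := by
    intro n
    have hB : MeasurableSet ({p : V × V | G.Adj p.1 p.2} ∩ (Prod.snd ⁻¹' A n)) :=
      hE.inter (measurable_snd (hA n))
    exact projL _ hB (fun p hp => hp.1)
  have hc₀n : ∀ n, MeasurableSet {x | c₀ x = n} := by
    intro n
    have heq : {x | c₀ x = n} =
        (A n ∩ {x | ∃ y, G.Adj x y ∧ y ∈ A n}ᶜ) ∩
          ⋂ (m : ℕ) (_ : m < n), (A m ∩ {x | ∃ y, G.Adj x y ∧ y ∈ A m}ᶜ)ᶜ := by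
      ext x
      simp only [hc₀def, Set.mem_setOf_eq, Nat.find_eq_iff (hexA x), Set.mem_inter_iff,
        Set.mem_iInter, Set.mem_compl_iff, Set.mem_setOf_eq]
      constructor
      · rintro ⟨⟨h1, h2⟩, h3⟩
        refine ⟨⟨h1, fun ⟨y, hy1, hy2⟩ => h2 y hy1 hy2⟩, fun m hm => ?_⟩
        rcases not_and_or.mp (h3 m hm) with h | h
        · exact fun hc => absurd hc.1 h
        · rintro ⟨-, h2'⟩
          push_neg at h
          obtain ⟨y, hy1, hy2⟩ := h
          exact h2' ⟨y, hy1, hy2⟩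
      · rintro ⟨⟨h1, h2⟩, h3⟩
        refine ⟨⟨h1, fun y hy1 hy2 => h2 ⟨y, hy1, hy2⟩⟩, fun m hm => ?_⟩
        intro ⟨hc1, hc2⟩
        exact h3 m hm ⟨hc1, fun ⟨y, hy1, hy2⟩ => hc2 y hy1 hy2⟩
    rw [heq]
    exact ((hA n).inter (hDN n).compl).inter
      (MeasurableSet.iInter fun m => MeasurableSet.iInter fun _ =>
        ((hA m).inter (hDN m).compl).compl)
  -- free colours via pigeonhole
  have hpig : ∀ (g : V → ℕ) (x : V), ∃ i, i ≤ d ∧ ∀ y, G.Adj x y → g y ≠ i + 1 := by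
    intro g x
    set U : Set ℕ := {i | ∃ y, G.Adj x y ∧ g y = i + 1} with hU
    have hUsub : (fun i => i + 1) '' U ⊆ g '' G.neighborSet x := by
      rintro _ ⟨i, ⟨y, hy, hgy⟩, rfl⟩
      exact ⟨y, hy, hgy⟩
    have himgfin : (g '' G.neighborSet x).Finite := (hlf x).image g
    have hsinj : Function.Injective (fun i : ℕ => i + 1) := add_left_injective 1
    have hUfin : U.Finite :=
      Set.Finite.of_finite_image (himgfin.subset hUsub) hsinj.injOn
    have hUcard : U.ncard ≤ d :=
      calc U.ncard = ((fun i => i + 1) '' U).ncard :=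
            (Set.ncard_image_of_injective U hsinj).symm
        _ ≤ (g '' G.neighborSet x).ncard := Set.ncard_le_ncard hUsub himgfin
        _ ≤ (G.neighborSet x).ncard := Set.ncard_image_le (hlf x)
        _ ≤ d := hdeg x
    by_contra hcon
    push_neg at hcon
    have hsub2 : Set.Iic d ⊆ U := by
      intro i hi
      obtain ⟨y, h1, h2⟩ := hcon i hi
      exact ⟨y, h1, h2⟩
    have hIic : (Set.Iic d).ncard = d + 1 := by
      rw [← Finset.coe_Iic, Set.ncard_coe_finset, Nat.card_Iic]
    have := Set.ncard_le_ncard hsub2 hUfin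
    omega
  have hexF : ∀ (g : V → ℕ) (x : V), ∃ i, ∀ y, G.Adj x y → g y ≠ i + 1 :=
    fun g x => (hpig g x).imp fun _ h => h.2
  set free : (V → ℕ) → V → ℕ := fun g x => Nat.find (hexF g x) with hfreedef
  have hfree_le : ∀ g x, free g x ≤ d := by
    intro g x
    obtain ⟨i, hid, hi⟩ := hpig g x
    exact le_trans (Nat.find_min' (hexF g x) hi) hid
  have hfree_spec : ∀ g x y, G.Adj x y → g y ≠ free g x + 1 :=
    fun g x => Nat.find_spec (hexF g x)
  -- measurability of "free"
  have hMD : ∀ (g : V → ℕ), Measurable g → ∀ j : ℕ,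
      MeasurableSet {x | ∃ y, G.Adj x y ∧ g y = j + 1} := by
    intro g hg j
    have hB : MeasurableSet ({p : V × V | G.Adj p.1 p.2} ∩ ((g ∘ Prod.snd) ⁻¹' {j + 1})) :=
      hE.inter ((hg.comp measurable_snd) (measurableSet_singleton _))
    exact projL _ hB (fun p hp => hp.1)
  have hMfree : ∀ (g : V → ℕ), Measurable g → ∀ i : ℕ,
      MeasurableSet {x | free g x = i} := by
    intro g hg i
    have heq : {x | free g x = i} =
        {x | ∃ y, G.Adj x y ∧ g y = i + 1}ᶜ ∩
          ⋂ (j : ℕ) (_ : j < i), {x | ∃ y, G.Adj x y ∧ g y = j + 1} := by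
      ext x
      simp only [hfreedef, Set.mem_setOf_eq, Nat.find_eq_iff (hexF g x), Set.mem_inter_iff,
        Set.mem_compl_iff, Set.mem_iInter, Set.mem_setOf_eq]
      constructor
      · rintro ⟨h1, h2⟩
        refine ⟨fun ⟨y, hy1, hy2⟩ => h1 y hy1 hy2, fun j hj => ?_⟩
        have := h2 j hj
        push_neg at this
        obtain ⟨y, hy1, hy2⟩ := this
        exact ⟨y, hy1, hy2⟩
      · rintro ⟨h1, h2⟩
        refine ⟨fun y hy1 hy2 => h1 ⟨y, hy1, hy2⟩, fun j hj => ?_⟩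
        intro hall
        obtain ⟨y, hy1, hy2⟩ := h2 j hj
        exact hall y hy1 hy2
    rw [heq]
    exact (hMD g hg i).compl.inter
      (MeasurableSet.iInter fun j => MeasurableSet.iInter fun _ => hMD g hg j)
  -- the stage colourings
  set g : ℕ → V → ℕ := stageCol c₀ free with hgdef
  have hg0 : ∀ x, g 0 x = 0 := fun x => rfl
  have hgsucc : ∀ n x, g (n + 1) x =
      if c₀ x = n then free (g n) x + 1 else g n x := fun n x => rfl
  have hMg : ∀ n, Measurable (g n) := by
    intro n
    induction n with
    | zero => exact measurable_const
    | succ n ihn =>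
      have hfm : Measurable (fun x => free (g n) x) :=
        measurable_to_countable' fun i => hMfree (g n) ihn i
      have : (fun x => g (n + 1) x) =
          fun x => if c₀ x = n then free (g n) x + 1 else g n x := by
        funext x; exact hgsucc n x
      rw [show g (n+1) = fun x => if c₀ x = n then free (g n) x + 1 else g n x from
        funext fun x => hgsucc n x]
      exact Measurable.ite (hc₀n n) (hfm.add_const 1) ihn
  -- basic facts about stages
  have L0 : ∀ n x, g n x ≠ 0 → c₀ x < n := by
    intro n
    induction n with
    | zero => intro x h; exact absurd (hg0 x) h
    | succ n ihn =>
      intro x h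
      by_cases hc : c₀ x = n
      · omega
      · rw [hgsucc n x, if_neg hc] at h
        exact lt_trans (ihn x h) (Nat.lt_succ_self n)
  have L1 : ∀ n x, g n x ≠ 0 → ∀ m, n ≤ m → g m x = g n x := by
    intro n x h m hm
    induction m, hm using Nat.le_induction with
    | base => rfl
    | succ m hm ihm =>
      have hc : c₀ x ≠ m := Nat.ne_of_lt (lt_of_lt_of_le (L0 n x h) hm)
      rw [hgsucc m x, if_neg hc]
      exact ihm
  set c' : V → ℕ := fun x => free (g (c₀ x)) x with hc'def
  have hstage : ∀ x, g (c₀ x + 1) x = c' x + 1 := by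
    intro x
    rw [hgsucc (c₀ x) x, if_pos rfl]
  have hfinal : ∀ x n, c₀ x < n → g n x = c' x + 1 := by
    intro x n h
    have h1 := hstage x
    have h2 : g (c₀ x + 1) x ≠ 0 := by rw [h1]; omega
    rw [L1 (c₀ x + 1) x h2 n (by omega), h1]
  -- properness of the final colouring
  have hproper : ∀ x y, G.Adj x y → c' x ≠ c' y := by
    intro x y hxy heq
    have hne := hc₀proper x y hxy
    rcases Nat.lt_or_ge (c₀ x) (c₀ y) with h | h
    · have h1 := hfinal x (c₀ y) h
      have h2 := hfree_spec (g (c₀ y)) y x hxy.symm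
      rw [h1] at h2
      exact h2 (show c' x + 1 = c' y + 1 by rw [heq])
    · have h' : c₀ y < c₀ x := lt_of_le_of_ne h (Ne.symm hne)
      have h1 := hfinal y (c₀ x) h'
      have h2 := hfree_spec (g (c₀ x)) x y hxy
      rw [h1] at h2
      exact h2 (show c' y + 1 = c' x + 1 by rw [heq])
  -- measurability of the final colouring
  have hMc' : ∀ v : ℕ, MeasurableSet {x | c' x = v} := by
    intro v
    have heq : {x | c' x = v} = ⋃ n, ({x | c₀ x = n} ∩ {x | free (g n) x = v}) := by
      ext x
      simp only [Set.mem_setOf_eq, Set.mem_iUnion, Set.mem_inter_iff, Set.mem_setOf_eq]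
      constructor
      · intro h; exact ⟨c₀ x, rfl, h⟩
      · rintro ⟨n, rfl, h⟩; exact h
    rw [heq]
    exact MeasurableSet.iUnion fun n => (hc₀n n).inter (hMfree (g n) (hMg n) v)
  refine ⟨fun x => ⟨c' x, Nat.lt_succ_of_le (hfree_le _ x)⟩, ?_, ?_⟩
  · apply measurable_to_countable'
    intro i
    have heq : (fun x => (⟨c' x, Nat.lt_succ_of_le (hfree_le _ x)⟩ : Fin (d + 1))) ⁻¹' {i} =
        {x | c' x = (i : ℕ)} := by
      ext x
      simp only [Set.mem_preimage, Set.mem_singleton_iff, Set.mem_setOf_eq, Fin.ext_iff]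
    rw [heq]
    exact hMc' i
  · intro x y hxy h
    exact hproper x y hxy (by simpa [Fin.ext_iff] using h)
end

section
/- For every Borel graph 𝒢 = (V, E, 𝓑) of maximum degree d and every integer r ≥ 1, there is a Borel colouring c : V → k with k := 1 + d·∑_{i=0}^{r-1}(d-1)^i such that every colour class is r-sparse (any two distinct vertices of the same colour are at graph distance greater than r). -/
open Set

lemma proj_subsingleton {X W : Type*} [MeasurableSpace X] [StandardBorelSpace X]
    [MeasurableSpace W] [StandardBorelSpace W] {A : Set (X × W)}
    (hA : MeasurableSet A) (h1 : ∀ x w w', (x,w) ∈ A → (x,w') ∈ A → w = w') :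
    MeasurableSet (Prod.fst '' A) := by
  have : StandardBorelSpace A := hA.standardBorel
  have hf : Measurable (fun p : A => (p : X × W).1) :=
    measurable_fst.comp measurable_subtype_coe
  have hinj : Function.Injective (fun p : A => (p : X × W).1) := by
    rintro ⟨⟨x, w⟩, hp⟩ ⟨⟨x', w'⟩, hq⟩ h
    simp only at h
    subst h
    have := h1 x w w' hp hq
    subst this
    rfl
  have h2 := (hf.measurableEmbedding hinj).measurableSet_range
  rw [Set.image_eq_range]
  exact h2

lemma range_ncard_fin {W : Type*} {m : ℕ} (w : Fin m → W) (hw : Function.Injective w) :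
    (Set.range w).ncard = m := by
  classical
  rw [show Set.range w = ↑(Finset.image w Finset.univ) by ext v; simp]
  rw [Set.ncard_coe_finset, Finset.card_image_of_injective _ hw, Finset.card_univ,
    Fintype.card_fin]

/-- Projection of a Borel set with finite sections of size ≤ N is Borel. -/
lemma proj_finite_sections {X W : Type*} [MeasurableSpace X] [StandardBorelSpace X]
    [MeasurableSpace W] [StandardBorelSpace W] (ι : W → ℝ) (hι : Measurable ι)
    (hinj : Function.Injective ι) :
    ∀ (N : ℕ) (A : Set (X × W)), MeasurableSet A →
      (∀ x, {w | (x, w) ∈ A}.Finite) → (∀ x, {w | (x, w) ∈ A}.ncard ≤ N) →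
      MeasurableSet {x | ∃ w, (x, w) ∈ A} := by
  intro N
  induction N with
  | zero =>
    intro A hA hfin hcard
    have he : {x | ∃ w, (x, w) ∈ A} = ∅ := by
      ext x
      simp only [mem_setOf_eq, mem_empty_iff_false, iff_false]
      rintro ⟨w, hw⟩
      have h0 : {w | (x, w) ∈ A}.ncard = 0 := le_antisymm (hcard x) (Nat.zero_le _)
      have := (Set.ncard_eq_zero (hfin x)).mp h0
      exact absurd this (Set.nonempty_iff_ne_empty.mp ⟨w, hw⟩)
    rw [he]; exact MeasurableSet.empty
  | succ N ih =>
    intro A hA hfin hcard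
    set D : Set (X × (Fin (N+1) → W)) :=
      {p | ∀ i, (p.1, p.2 i) ∈ A} ∩ {p | StrictMono (ι ∘ p.2)} with hD
    have hDmeas : MeasurableSet D := by
      apply MeasurableSet.inter
      · rw [show {p : X × (Fin (N+1) → W) | ∀ i, (p.1, p.2 i) ∈ A}
            = ⋂ i, {p : X × (Fin (N+1) → W) | (p.1, p.2 i) ∈ A} by ext p; simp]
        refine MeasurableSet.iInter fun i => ?_
        exact (measurable_fst.prodMk ((measurable_pi_apply i).comp measurable_snd)) hA
      · rw [show {p : X × (Fin (N+1) → W) | StrictMono (ι ∘ p.2)}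
            = ⋂ (i : Fin (N+1)) (j : Fin (N+1)) (_ : i < j),
                {p : X × (Fin (N+1) → W) | ι (p.2 i) < ι (p.2 j)} by
          ext p
          simp only [mem_iInter, mem_setOf_eq]
          exact ⟨fun h i j hij => h hij, fun h a b hab => h a b hab⟩]
        refine MeasurableSet.iInter fun i => MeasurableSet.iInter fun j =>
          MeasurableSet.iInter fun _ => ?_
        exact measurableSet_lt (hι.comp ((measurable_pi_apply i).comp measurable_snd))
          (hι.comp ((measurable_pi_apply j).comp measurable_snd))
    have hDsub : ∀ x (w w' : Fin (N+1) → W), (x, w) ∈ D → (x, w') ∈ D → w = w' := by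
      rintro x w w' ⟨hw1, hw2⟩ ⟨hw1', hw2'⟩
      have hwinj : Function.Injective w := by
        intro a b h
        by_contra hne
        rcases lt_or_gt_of_ne hne with hlt | hlt
        · exact absurd (congrArg ι h) (ne_of_lt (hw2 hlt))
        · exact absurd (congrArg ι h).symm (ne_of_lt (hw2 hlt))
      have hwinj' : Function.Injective w' := by
        intro a b h
        by_contra hne
        rcases lt_or_gt_of_ne hne with hlt | hlt
        · exact absurd (congrArg ι h) (ne_of_lt (hw2' hlt))
        · exact absurd (congrArg ι h).symm (ne_of_lt (hw2' hlt))
      have hr : Set.range w = {v | (x, v) ∈ A} := by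
        apply Set.eq_of_subset_of_ncard_le
        · rintro v ⟨i, rfl⟩; exact hw1 i
        · rw [range_ncard_fin w hwinj]; exact hcard x
        · exact hfin x
      have hr' : Set.range w' = {v | (x, v) ∈ A} := by
        apply Set.eq_of_subset_of_ncard_le
        · rintro v ⟨i, rfl⟩; exact hw1' i
        · rw [range_ncard_fin w' hwinj']; exact hcard x
        · exact hfin x
      have hrange : Set.range (ι ∘ w) = Set.range (ι ∘ w') := by
        rw [Set.range_comp, Set.range_comp, hr, hr']
      haveI hwf : WellFoundedLT (Fin (N+1)) := inferInstance
      have heq : ι ∘ w = ι ∘ w' := (StrictMono.range_inj hw2 hw2').mp hrange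

      funext i
      exact hinj (congrFun heq i)
    have hT : MeasurableSet (Prod.fst '' D) := proj_subsingleton hDmeas hDsub
    -- if a section is big, x is in the projection of D
    have hbig : ∀ x, N + 1 ≤ {w | (x, w) ∈ A}.ncard → x ∈ Prod.fst '' D := by
      intro x hge
      obtain ⟨t, hts, htc⟩ := Set.exists_subset_card_eq hge
      have htfin : t.Finite := (hfin x).subset hts
      have htfc : htfin.toFinset.card = N + 1 :=
        (Set.ncard_eq_toFinset_card t htfin).symm.trans htc
      have himfc : (htfin.toFinset.image ι).card = N + 1 := by
        rw [Finset.card_image_of_injective _ hinj, htfc]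
      set e := (htfin.toFinset.image ι).orderIsoOfFin himfc with he
      have hmem : ∀ i : Fin (N+1), ∃ v, v ∈ htfin.toFinset ∧ ι v = (e i : ℝ) := by
        intro i
        have h2 : (e i : ℝ) ∈ htfin.toFinset.image ι := (e i).2
        exact Finset.mem_image.mp h2
      set w : Fin (N+1) → W := fun i => Classical.choose (hmem i) with hwdef
      have hw1 : ∀ i, w i ∈ htfin.toFinset := fun i => (Classical.choose_spec (hmem i)).1
      have hw2 : ∀ i, ι (w i) = (e i : ℝ) := fun i => (Classical.choose_spec (hmem i)).2
      refine ⟨(x, w), ⟨?_, ?_⟩, rfl⟩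
      · intro i
        have : w i ∈ t := by
          have := hw1 i; rwa [Set.Finite.mem_toFinset] at this
        exact hts this
      · intro i j hij
        have := e.strictMono hij
        rw [show (ι ∘ w) i = (e i : ℝ) from hw2 i, show (ι ∘ w) j = (e j : ℝ) from hw2 j]
        exact this
    set A' : Set (X × W) := A ∩ ((Prod.fst '' D)ᶜ ×ˢ univ) with hA'
    have hA'meas : MeasurableSet A' := hA.inter (hT.compl.prod MeasurableSet.univ)
    have hA'fin : ∀ x, {w | (x, w) ∈ A'}.Finite := fun x =>
      (hfin x).subset (fun w hw => hw.1)
    have hA'card : ∀ x, {w | (x, w) ∈ A'}.ncard ≤ N := by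
      intro x
      by_cases hx : x ∈ Prod.fst '' D
      · have he : {w | (x, w) ∈ A'} = ∅ := by
          ext w
          simp only [hA', mem_setOf_eq, mem_inter_iff, Set.mem_prod, mem_compl_iff,
            mem_univ, and_true, mem_empty_iff_false, iff_false]
          rintro ⟨-, h⟩; exact h hx
        simp [he]
      · have hle : {w | (x, w) ∈ A}.ncard ≤ N := by
          by_contra hgt
          push_neg at hgt
          exact hx (hbig x hgt)
        exact le_trans (Set.ncard_le_ncard (fun w hw => hw.1) (hfin x)) hle
    have key : {x | ∃ w, (x, w) ∈ A} = (Prod.fst '' D) ∪ {x | ∃ w, (x, w) ∈ A'} := by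
      ext x
      simp only [mem_setOf_eq, mem_union]
      constructor
      · rintro ⟨w, hw⟩
        by_cases hx : x ∈ Prod.fst '' D
        · exact Or.inl hx
        · exact Or.inr ⟨w, hw, by simp [hx]⟩
      · rintro (⟨⟨x', w⟩, hd, rfl⟩ | ⟨w, hw, -⟩)
        · exact ⟨w 0, hd.1 0⟩
        · exact ⟨w, hw⟩
    rw [key]
    exact hT.union (ih A' hA'meas hA'fin hA'card)

open Set Finset

section Graph
variable {V : Type*} {G : SimpleGraph V} {d : ℕ}

lemma walk_succ_iff (x z : V) (s : ℕ) :
    (∃ w : G.Walk x z, w.length = s + 1) ↔ ∃ y, G.Adj x y ∧ ∃ w : G.Walk y z, w.length = s := by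
  constructor
  · rintro ⟨w, hw⟩
    cases w with
    | nil => simp at hw
    | cons h p =>
      exact ⟨_, h, p, by simpa using hw⟩
  · rintro ⟨y, h, w, hw⟩
    exact ⟨SimpleGraph.Walk.cons h w, by simp [hw]⟩

lemma walk_succ_iff' (x z : V) (s : ℕ) :
    (∃ w : G.Walk x z, w.length = s + 1) ↔
      ∃ y, (∃ w : G.Walk x y, w.length = s) ∧ G.Adj y z := by
  have hrev : ∀ (a b : V) (t : ℕ), (∃ w : G.Walk a b, w.length = t) ↔
      (∃ w : G.Walk b a, w.length = t) := by
    intro a b t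
    constructor
    · rintro ⟨w, hw⟩; exact ⟨w.reverse, by simp [hw]⟩
    · rintro ⟨w, hw⟩; exact ⟨w.reverse, by simp [hw]⟩
  rw [hrev, walk_succ_iff]
  constructor
  · rintro ⟨y, h, w, hw⟩
    exact ⟨y, (hrev y x s).mp ⟨w, hw⟩, h.symm⟩
  · rintro ⟨y, ⟨w, hw⟩, h⟩
    exact ⟨y, h.symm, (hrev x y s).mp ⟨w, hw⟩⟩

lemma walkset_finite (hlf : ∀ x : V, (G.neighborSet x).Finite) :
    ∀ (s : ℕ) (x : V), {y | ∃ w : G.Walk x y, w.length = s}.Finite := by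
  intro s
  induction s with
  | zero =>
    intro x
    have : {y | ∃ w : G.Walk x y, w.length = 0} = {x} := by
      ext y
      simp only [mem_setOf_eq, mem_singleton_iff]
      rw [SimpleGraph.Walk.exists_length_eq_zero_iff]
      exact eq_comm
    rw [this]; exact finite_singleton x
  | succ s ih =>
    intro x
    have : {y | ∃ w : G.Walk x y, w.length = s + 1}
        ⊆ ⋃ z ∈ G.neighborSet x, {y | ∃ w : G.Walk z y, w.length = s} := by
      intro y hy
      rw [mem_setOf_eq, walk_succ_iff] at hy
      obtain ⟨z, hz, hw⟩ := hy
      exact mem_biUnion hz hw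
    exact (Set.Finite.biUnion (hlf x) (fun z _ => ih z)).subset this

lemma ncard_le_sum_of_subset_biUnion {α β : Type*} (F : Finset β) (g : β → Set α)
    (hg : ∀ b ∈ F, (g b).Finite) (m : β → ℕ) (hm : ∀ b ∈ F, (g b).ncard ≤ m b)
    {S : Set α} (hS : S ⊆ ⋃ b ∈ F, g b) : S.ncard ≤ ∑ b ∈ F, m b := by
  classical
  have hfineq : ∀ b ∈ F, g b = ↑(if h : b ∈ F then (hg b h).toFinset else ∅) := by
    intro b hb; simp [hb]
  have hsub : S ⊆ ↑(F.biUnion fun b => if h : b ∈ F then (hg b h).toFinset else ∅) := by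
    intro a ha
    obtain ⟨b, hb, hab⟩ := by simpa using hS ha
    simp only [Finset.coe_biUnion, Set.mem_iUnion]
    exact ⟨b, hb, by rw [← hfineq b hb]; exact hab⟩
  calc S.ncard ≤ (↑(F.biUnion fun b => if h : b ∈ F then (hg b h).toFinset else ∅) : Set α).ncard :=
        Set.ncard_le_ncard hsub (Finset.finite_toSet _)
    _ = (F.biUnion fun b => if h : b ∈ F then (hg b h).toFinset else ∅).card :=
        Set.ncard_coe_finset _
    _ ≤ ∑ b ∈ F, (if h : b ∈ F then (hg b h).toFinset else ∅).card := Finset.card_biUnion_le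
    _ ≤ ∑ b ∈ F, m b := by
        apply Finset.sum_le_sum
        intro b hb
        simp only [hb, dif_pos]
        rw [← Set.ncard_eq_toFinset_card (g b) (hg b hb)]
        exact hm b hb

lemma sphere_finite (hlf : ∀ x : V, (G.neighborSet x).Finite) (x : V) (s : ℕ) (hs : 1 ≤ s) :
    {z | G.dist x z = s}.Finite := by
  apply (walkset_finite hlf s x).subset
  intro z hz
  rw [mem_setOf_eq] at hz
  have hz0 : G.dist x z ≠ 0 := by omega
  obtain ⟨w, hw⟩ := SimpleGraph.exists_walk_of_dist_ne_zero hz0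
  exact ⟨w, by rw [hw, hz]⟩

lemma sphere_step (hlf : ∀ x : V, (G.neighborSet x).Finite)
    (hdeg : ∀ x : V, (G.neighborSet x).ncard ≤ d) (x : V) (s : ℕ) (hs : 1 ≤ s) :
    {y | G.dist x y = s + 1}.ncard ≤ (d - 1) * {y | G.dist x y = s}.ncard := by
  classical
  -- every z at distance s has a neighbor at distance s - 1
  have hpred : ∀ z, G.dist x z = s → ∃ p, G.Adj p z ∧ G.dist x p = s - 1 := by
    intro z hz
    have hz0 : G.dist x z ≠ 0 := by omega
    obtain ⟨w, hw⟩ := SimpleGraph.exists_walk_of_dist_ne_zero hz0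
    rw [hz] at hw
    obtain ⟨s', rfl⟩ : ∃ s', s = s' + 1 := ⟨s - 1, by omega⟩
    have := (walk_succ_iff' x z s').mp ⟨w, hw⟩
    obtain ⟨p, ⟨w', hw'⟩, hadj⟩ := this
    refine ⟨p, hadj, ?_⟩
    have h1 : G.dist x p ≤ s' := hw' ▸ SimpleGraph.dist_le w'
    have h2 : G.dist x z ≤ G.dist x p + 1 := by
      have hr : G.Reachable x p := ⟨w'⟩
      obtain ⟨w'', hw''⟩ := hr.exists_walk_length_eq_dist
      have := SimpleGraph.dist_le (w''.concat hadj)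
      rwa [SimpleGraph.Walk.length_concat, hw''] at this
    omega
  -- choice of predecessor
  have hSfin : {z | G.dist x z = s}.Finite := sphere_finite hlf x s (by omega)
  set F := hSfin.toFinset with hF
  set pz : V → V := fun z => if h : G.dist x z = s then Classical.choose (hpred z h) else z
    with hpz
  have hpzspec : ∀ z (h : G.dist x z = s), G.Adj (pz z) z ∧ G.dist x (pz z) = s - 1 := by
    intro z h
    rw [hpz]
    simp only [h, dif_pos]
    exact Classical.choose_spec (hpred z h)
  have key : {y | G.dist x y = s + 1} ⊆ ⋃ z ∈ F, (G.neighborSet z \ {pz z}) := by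
    intro y hy
    rw [mem_setOf_eq] at hy
    have hy0 : G.dist x y ≠ 0 := by omega
    obtain ⟨w, hw⟩ := SimpleGraph.exists_walk_of_dist_ne_zero hy0
    rw [hy] at hw
    obtain ⟨z, ⟨w', hw'⟩, hadj⟩ := (walk_succ_iff' x y s).mp ⟨w, hw⟩
    have hzd : G.dist x z = s := by
      have h1 : G.dist x z ≤ s := hw' ▸ SimpleGraph.dist_le w'
      have h2 : G.dist x y ≤ G.dist x z + 1 := by
        have hr : G.Reachable x z := ⟨w'⟩
        obtain ⟨w'', hw''⟩ := hr.exists_walk_length_eq_dist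
        have := SimpleGraph.dist_le (w''.concat hadj)
        rwa [SimpleGraph.Walk.length_concat, hw''] at this
      omega
    have hzF : z ∈ F := (Set.Finite.mem_toFinset hSfin).mpr hzd
    apply Set.mem_biUnion hzF
    refine ⟨hadj, ?_⟩
    intro hmem
    rw [Set.mem_singleton_iff] at hmem
    have := (hpzspec z hzd).2
    rw [← hmem] at this
    omega
  have hbound := ncard_le_sum_of_subset_biUnion F (fun z => G.neighborSet z \ {pz z})
    (fun z _ => ((hlf z).subset Set.diff_subset)) (fun _ => d - 1) ?_ key
  · calc {y | G.dist x y = s + 1}.ncard ≤ ∑ _z ∈ F, (d - 1) := hbound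
      _ = F.card * (d - 1) := by rw [Finset.sum_const, smul_eq_mul]
      _ = (d - 1) * {y | G.dist x y = s}.ncard := by
          rw [Nat.mul_comm, hF, ← Set.ncard_eq_toFinset_card _ hSfin]
  · intro z hz
    have hzd : G.dist x z = s := (Set.Finite.mem_toFinset hSfin).mp hz
    have hp := (hpzspec z hzd).1
    have hpmem : pz z ∈ G.neighborSet z := hp.symm
    have h1 : (G.neighborSet z \ {pz z}).ncard = (G.neighborSet z).ncard - 1 := by
      rw [Set.ncard_diff_singleton_of_mem hpmem]
    rw [h1]
    show (G.neighborSet z).ncard - 1 ≤ d - 1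
    have := hdeg z
    omega

lemma sphere_bound (hlf : ∀ x : V, (G.neighborSet x).Finite)
    (hdeg : ∀ x : V, (G.neighborSet x).ncard ≤ d) (x : V) :
    ∀ s : ℕ, 1 ≤ s → {y | G.dist x y = s}.ncard ≤ d * (d - 1) ^ (s - 1) := by
  intro s
  induction s with
  | zero => omega
  | succ s ih =>
    intro _
    by_cases hs : 1 ≤ s
    · calc {y | G.dist x y = s + 1}.ncard ≤ (d - 1) * {y | G.dist x y = s}.ncard :=
            sphere_step hlf hdeg x s hs
        _ ≤ (d - 1) * (d * (d - 1) ^ (s - 1)) := Nat.mul_le_mul_left _ (ih hs)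
        _ = d * (d - 1) ^ (s + 1 - 1) := by
            rw [show s + 1 - 1 = (s - 1) + 1 by omega, pow_succ]
            ring
    · have hs0 : s = 0 := by omega
      subst hs0
      have : {y | G.dist x y = 1} ⊆ G.neighborSet x := by
        intro y hy
        rw [mem_setOf_eq, SimpleGraph.dist_eq_one_iff_adj] at hy
        exact hy
      calc {y | G.dist x y = 1}.ncard ≤ (G.neighborSet x).ncard :=
            Set.ncard_le_ncard this (hlf x)
        _ ≤ d := hdeg x
        _ = d * (d - 1) ^ (1 - 1) := by simp

lemma ball_card (hlf : ∀ x : V, (G.neighborSet x).Finite)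
    (hdeg : ∀ x : V, (G.neighborSet x).ncard ≤ d) (x : V) (r : ℕ) :
    {y | y ≠ x ∧ ∃ s, 1 ≤ s ∧ s ≤ r ∧ ∃ w : G.Walk x y, w.length = s}.ncard
      ≤ d * ∑ i ∈ Finset.range r, (d - 1) ^ i := by
  classical
  have hsub : {y | y ≠ x ∧ ∃ s, 1 ≤ s ∧ s ≤ r ∧ ∃ w : G.Walk x y, w.length = s}
      ⊆ ⋃ s ∈ Finset.Icc 1 r, {y | G.dist x y = s} := by
    rintro y ⟨hyx, s, hs1, hsr, w, hw⟩
    have hne : G.dist x y ≠ 0 := by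
      rw [SimpleGraph.dist_ne_zero_iff_ne_and_reachable]
      exact ⟨fun h => hyx h.symm, ⟨w⟩⟩
    have hle : G.dist x y ≤ r := le_trans (hw ▸ SimpleGraph.dist_le w) hsr
    apply Set.mem_biUnion (Finset.mem_Icc.mpr ⟨by omega, hle⟩)
    exact rfl
  have hmain := ncard_le_sum_of_subset_biUnion (Finset.Icc 1 r)
    (fun s => {y | G.dist x y = s})
    (fun s hs => sphere_finite hlf x s (Finset.mem_Icc.mp hs).1)
    (fun s => d * (d - 1) ^ (s - 1))
    (fun s hs => sphere_bound hlf hdeg x s (Finset.mem_Icc.mp hs).1) hsub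
  refine le_trans hmain (le_of_eq ?_)
  have himg : Finset.Icc 1 r = (Finset.range r).image (· + 1) := by
    ext s
    simp only [Finset.mem_Icc, Finset.mem_image, Finset.mem_range]
    constructor
    · rintro ⟨h1, h2⟩; exact ⟨s - 1, by omega, by omega⟩
    · rintro ⟨i, hi, rfl⟩; omega
  rw [himg, Finset.sum_image (by intro a _ b _ h; simp only at h; omega)]
  simp only [Nat.add_sub_cancel]
  rw [Finset.mul_sum]

end Graph

section Meas
variable {V : Type*} [MeasurableSpace V] [StandardBorelSpace V]
  {G : SimpleGraph V} {d : ℕ}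

lemma measurable_star (ι : V → ℝ) (hι : Measurable ι) (hinj : Function.Injective ι) {R : Set (V × V)} (hR : MeasurableSet R) {N : ℕ}
    (hfin : ∀ x, {y | (x, y) ∈ R}.Finite) (hcard : ∀ x, {y | (x, y) ∈ R}.ncard ≤ N)
    {B : Set V} (hB : MeasurableSet B) :
    MeasurableSet {x | ∃ y, (x, y) ∈ R ∧ y ∈ B} := by
  have heq : {x | ∃ y, (x, y) ∈ R ∧ y ∈ B} = {x | ∃ y, (x, y) ∈ R ∩ (univ ×ˢ B)} := by
    ext x
    simp [Set.mem_prod]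
  rw [heq]
  apply proj_finite_sections ι hι hinj N _ (hR.inter (MeasurableSet.univ.prod hB))
  · intro x
    exact (hfin x).subset (fun y hy => hy.1)
  · intro x
    exact le_trans (Set.ncard_le_ncard (fun y hy => hy.1) (hfin x)) (hcard x)

lemma walkRel_measurable (ι : V → ℝ) (hι : Measurable ι) (hinj : Function.Injective ι)
    (hE : MeasurableSet {p : V × V | G.Adj p.1 p.2})
    (hlf : ∀ x : V, (G.neighborSet x).Finite)
    (hdeg : ∀ x : V, (G.neighborSet x).ncard ≤ d) :
    ∀ s : ℕ, MeasurableSet {p : V × V | ∃ w : G.Walk p.1 p.2, w.length = s} := by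
  intro s
  induction s with
  | zero =>
    have heq : {p : V × V | ∃ w : G.Walk p.1 p.2, w.length = 0}
        = {p : V × V | ι p.1 = ι p.2} := by
      ext p
      rw [mem_setOf_eq, SimpleGraph.Walk.exists_length_eq_zero_iff, mem_setOf_eq]
      exact ⟨fun h => congrArg ι h, fun h => hinj h⟩
    rw [heq]
    exact measurableSet_eq_fun (hι.comp measurable_fst) (hι.comp measurable_snd)
  | succ s ih =>
    set A : Set ((V × V) × V) :=
      {q | G.Adj q.1.1 q.2 ∧ ∃ w : G.Walk q.2 q.1.2, w.length = s} with hA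
    have hAmeas : MeasurableSet A := by
      apply MeasurableSet.inter
      · exact (measurable_fst.fst.prodMk measurable_snd) hE
      · exact (measurable_snd.prodMk measurable_fst.snd) ih
    have heq : {p : V × V | ∃ w : G.Walk p.1 p.2, w.length = s + 1}
        = {p : V × V | ∃ y, (p, y) ∈ A} := by
      ext p
      rw [mem_setOf_eq, walk_succ_iff, mem_setOf_eq]
      rfl
    rw [heq]
    apply proj_finite_sections ι hι hinj d A hAmeas
    · intro p
      exact (hlf p.1).subset (fun y hy => hy.1)
    · intro p
      exact le_trans (Set.ncard_le_ncard (fun y hy => hy.1) (hlf p.1)) (hdeg p.1)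

end Meas

section Greedy
variable {V : Type*}

open Classical in
noncomputable def greedyF (A : V → V → Prop) (c0 : V → ℕ) (k n : ℕ)
    (prev : ∀ m, m < n → V → ℕ) (x : V) : ℕ :=
  let free := (Finset.range k).filter
    fun j => ¬ ∃ y, A x y ∧ ∃ h : c0 y < n, prev (c0 y) h y = j
  if h : free.Nonempty then free.min' h else 0

lemma greedyF_congr {A : V → V → Prop} {c0 : V → ℕ} {k n : ℕ}
    {p q : ∀ m, m < n → V → ℕ} (h : ∀ m hm x, p m hm x = q m hm x) :
    greedyF A c0 k n p = greedyF A c0 k n q := by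
  have : p = q := funext fun m => funext fun hm => funext fun x => h m hm x
  rw [this]

noncomputable def gvec (A : V → V → Prop) (c0 : V → ℕ) (k : ℕ) :
    (n : ℕ) → ∀ m, m < n → V → ℕ
  | 0 => fun m h => absurd h (Nat.not_lt_zero m)
  | n+1 => fun m h =>
      if hm : m < n then gvec A c0 k n m hm
      else greedyF A c0 k m (fun l hl => gvec A c0 k n l (by omega))

noncomputable def greedy (A : V → V → Prop) (c0 : V → ℕ) (k : ℕ) (n : ℕ) : V → ℕ :=
  greedyF A c0 k n (gvec A c0 k n)

lemma gvec_eq (A : V → V → Prop) (c0 : V → ℕ) (k : ℕ) :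
    ∀ n m (h : m < n), gvec A c0 k n m h = greedy A c0 k m := by
  intro n
  induction n with
  | zero => intro m h; exact absurd h (Nat.not_lt_zero m)
  | succ n ih =>
    intro m h
    by_cases hm : m < n
    · simp only [gvec, dif_pos hm]
      exact ih m hm
    · have hmn : m = n := by omega
      subst hmn
      simp only [gvec, dif_neg hm]
      rw [greedy]

lemma greedy_unfold (A : V → V → Prop) (c0 : V → ℕ) (k n : ℕ) :
    greedy A c0 k n = greedyF A c0 k n (fun m _ => greedy A c0 k m) := by
  rw [greedy]
  exact greedyF_congr (fun m hm x => congrFun (gvec_eq A c0 k n m hm) x)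

lemma greedyF_lt {A : V → V → Prop} {c0 : V → ℕ} {k : ℕ} (hk : 0 < k) (n : ℕ)
    (prev : ∀ m, m < n → V → ℕ) (x : V) : greedyF A c0 k n prev x < k := by
  classical
  rw [greedyF]
  split_ifs with h
  · have := Finset.min'_mem _ h
    have := (Finset.mem_filter.mp this).1
    exact Finset.mem_range.mp this
  · exact hk

lemma greedy_lt {A : V → V → Prop} {c0 : V → ℕ} {k : ℕ} (hk : 0 < k) (n : ℕ) (x : V) :
    greedy A c0 k n x < k := greedyF_lt hk n _ x

lemma greedyF_eq_iff {A : V → V → Prop} {c0 : V → ℕ} {k n : ℕ}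
    {prev : ∀ m, m < n → V → ℕ} {x : V}
    (hex : ∃ j, j < k ∧ ¬ ∃ y, A x y ∧ ∃ h : c0 y < n, prev (c0 y) h y = j) (j : ℕ) :
    greedyF A c0 k n prev x = j ↔
      j < k ∧ (¬ ∃ y, A x y ∧ ∃ h : c0 y < n, prev (c0 y) h y = j) ∧
        ∀ j' < j, ∃ y, A x y ∧ ∃ h : c0 y < n, prev (c0 y) h y = j' := by
  classical
  set P : ℕ → Prop := fun j => ∃ y, A x y ∧ ∃ h : c0 y < n, prev (c0 y) h y = j with hP
  set free := (Finset.range k).filter (fun j => ¬ P j) with hfree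
  have hne : free.Nonempty := by
    obtain ⟨j0, hj0k, hj0⟩ := hex
    exact ⟨j0, Finset.mem_filter.mpr ⟨Finset.mem_range.mpr hj0k, hj0⟩⟩
  have hg : greedyF A c0 k n prev x = free.min' hne := by
    show (if h : free.Nonempty then free.min' h else 0) = free.min' hne
    rw [dif_pos hne]
  rw [hg]
  constructor
  · rintro rfl
    have hmem := Finset.min'_mem free hne
    rw [Finset.mem_filter, Finset.mem_range] at hmem
    refine ⟨hmem.1, hmem.2, ?_⟩
    intro j' hj'
    by_contra hPj'
    have : j' ∈ free := Finset.mem_filter.mpr ⟨Finset.mem_range.mpr (by omega), hPj'⟩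
    have := Finset.min'_le free j' this
    omega
  · rintro ⟨hjk, hnPj, hmin⟩
    have hjfree : j ∈ free := Finset.mem_filter.mpr ⟨Finset.mem_range.mpr hjk, hnPj⟩
    have h1 := Finset.min'_le free j hjfree
    have hmem := Finset.min'_mem free hne
    rw [Finset.mem_filter] at hmem
    rcases Nat.lt_or_ge (free.min' hne) j with hlt | hge
    · exact absurd (hmin _ hlt) hmem.2
    · omega

lemma greedy_exists_free {A : V → V → Prop} {c0 : V → ℕ} {k n : ℕ} {x : V}
    (hfin : {y | A x y}.Finite) (hcard : {y | A x y}.ncard < k) :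
    ∃ j, j < k ∧
      ¬ ∃ y, A x y ∧ ∃ h : c0 y < n, greedy A c0 k (c0 y) y = j := by
  classical
    by_contra hall
    push_neg at hall
    -- every colour < k is attained by a neighbour
    have pick : ∀ j : ℕ, j < k → ∃ y, y ∈ hfin.toFinset ∧
        greedy A c0 k (c0 y) y = j := by
      intro j hj
      obtain ⟨y, hy, _, hgy⟩ := hall j hj
      exact ⟨y, (Set.Finite.mem_toFinset hfin).mpr hy, hgy⟩
    set f : ℕ → V := fun j => if hj : j < k then Classical.choose (pick j hj) else x with hf
    have hspec : ∀ j < k, f j ∈ hfin.toFinset ∧ greedy A c0 k (c0 (f j)) (f j) = j := by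
      intro j hj
      rw [hf]
      simp only [hj, dif_pos]
      exact Classical.choose_spec (pick j hj)
    have hcard2 := Finset.card_le_card_of_injOn f
      (fun j hj => (hspec j (Finset.mem_range.mp hj)).1)
      (by
        intro a ha b hb hab
        rw [Finset.coe_range, Set.mem_Iio] at ha hb
        rw [← (hspec a ha).2, ← (hspec b hb).2, hab])
    rw [Finset.card_range, ← Set.ncard_eq_toFinset_card _ hfin] at hcard2
    omega

lemma greedy_proper {A : V → V → Prop} {c0 : V → ℕ} {k n : ℕ} {x : V}
    (hfin : {y | A x y}.Finite) (hcard : {y | A x y}.ncard < k) :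
    ¬ ∃ y, A x y ∧ ∃ _h : c0 y < n, greedy A c0 k (c0 y) y = greedy A c0 k n x := by
  classical
  have hex := greedy_exists_free (c0 := c0) (n := n) hfin hcard
  intro hcon
  rw [greedy_unfold A c0 k n] at hcon
  have := (greedyF_eq_iff (prev := fun m _ => greedy A c0 k m) (x := x) hex _).mp rfl
  exact this.2.1 hcon

end Greedy

section Coloring
variable {V : Type*} [MeasurableSpace V] [StandardBorelSpace V]

lemma exists_countable_coloring (ι : V → ℝ) (hι : Measurable ι) (hinj : Function.Injective ι)
    {A : V → V → Prop} (hA : MeasurableSet {p : V × V | A p.1 p.2})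
    {N : ℕ} (hfin : ∀ x, {y | A x y}.Finite) (hcard : ∀ x, {y | A x y}.ncard ≤ N)
    (hne : ∀ x y, A x y → x ≠ y) :
    ∃ c0 : V → ℕ, (∀ n, MeasurableSet {x | c0 x = n}) ∧ ∀ x y, A x y → c0 x ≠ c0 y := by
  classical
  obtain ⟨q, hqsurj⟩ := exists_surjective_nat (ℚ × ℚ)
  set U : ℕ → Set V := fun n => ι ⁻¹' (Set.Ioo ((q n).1 : ℝ) ((q n).2 : ℝ)) with hU
  have hUmeas : ∀ n, MeasurableSet (U n) := fun n => hι measurableSet_Ioo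
  set good : V → ℕ → Prop := fun x n => x ∈ U n ∧ ∀ y, A x y → y ∉ U n with hgooddef
  have hgood : ∀ x, ∃ n, good x n := by
    intro x
    set S : Set ℝ := ι '' {y | A x y} with hS
    have hSfin : S.Finite := (hfin x).image ι
    have hxS : ι x ∉ S := by
      rintro ⟨y, hy, hyx⟩
      exact hne x y hy (hinj hyx).symm
    obtain ⟨δ, hδpos, hδ⟩ : ∃ δ : ℝ, 0 < δ ∧ ∀ t ∈ S, δ ≤ |t - ι x| := by
      rcases S.eq_empty_or_nonempty with hSe | hSne
      · exact ⟨1, one_pos, by simp [hSe]⟩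
      · have hSfne : (hSfin.toFinset.image (fun t => |t - ι x|)).Nonempty := by
          apply Finset.image_nonempty.mpr
          rwa [Set.Finite.toFinset_nonempty]
        refine ⟨(hSfin.toFinset.image (fun t => |t - ι x|)).min' hSfne, ?_, ?_⟩
        · obtain ⟨t, ht, hteq⟩ := Finset.mem_image.mp (Finset.min'_mem _ hSfne)
          rw [← hteq, abs_pos, sub_ne_zero]
          intro hcon
          rw [Set.Finite.mem_toFinset] at ht
          exact hxS (hcon ▸ ht)
        · intro t ht
          apply Finset.min'_le
          rw [Finset.mem_image]
          exact ⟨t, (Set.Finite.mem_toFinset hSfin).mpr ht, rfl⟩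
    obtain ⟨q1, hq1, hq1'⟩ := exists_rat_btwn (show ι x - δ < ι x by linarith)
    obtain ⟨q2, hq2, hq2'⟩ := exists_rat_btwn (show ι x < ι x + δ by linarith)
    obtain ⟨n, hn⟩ := hqsurj (q1, q2)
    refine ⟨n, ?_, ?_⟩
    · show ι x ∈ Set.Ioo ((q n).1 : ℝ) ((q n).2 : ℝ)
      rw [hn]
      exact ⟨hq1', hq2⟩
    · intro y hy hymem
      have hyS : ι y ∈ S := ⟨y, hy, rfl⟩
      have := hδ _ hyS
      have hymem' : ι y ∈ Set.Ioo ((q n).1 : ℝ) ((q n).2 : ℝ) := hymem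
      rw [hn] at hymem'
      obtain ⟨h1, h2⟩ := hymem'
      have habs : |ι y - ι x| < δ := by
        rw [abs_sub_lt_iff]
        constructor <;> [linarith [h2, hq2']; linarith [h1, hq1]]
      linarith
  refine ⟨fun x => Nat.find (hgood x), ?_, ?_⟩
  · intro n
    have heq : ∀ m, {x | good x m} =
        U m ∩ {x | ∃ y, (x, y) ∈ {p : V × V | A p.1 p.2} ∧ y ∈ U m}ᶜ := by
      intro m
      ext x
      simp only [hgooddef, Set.mem_setOf_eq, Set.mem_inter_iff, Set.mem_compl_iff]
      constructor
      · rintro ⟨h1, h2⟩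
        exact ⟨h1, fun ⟨y, hy1, hy2⟩ => h2 y hy1 hy2⟩
      · rintro ⟨h1, h2⟩
        exact ⟨h1, fun y hy1 hy2 => h2 ⟨y, hy1, hy2⟩⟩
    have hgm : ∀ m, MeasurableSet {x | good x m} := by
      intro m
      rw [heq m]
      exact (hUmeas m).inter (measurable_star ι hι hinj hA hfin hcard (hUmeas m)).compl
    have : {x | Nat.find (hgood x) = n}
        = {x | good x n} ∩ (⋃ m, ⋃ (_ : m < n), {x | good x m})ᶜ := by
      ext x
      simp only [Set.mem_setOf_eq, Set.mem_inter_iff, Set.mem_compl_iff, Set.mem_iUnion]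
      rw [Nat.find_eq_iff]
      constructor
      · rintro ⟨h1, h2⟩
        exact ⟨h1, fun ⟨m, hm, hgm⟩ => h2 m hm hgm⟩
      · rintro ⟨h1, h2⟩
        exact ⟨h1, fun m hm hgm => h2 ⟨m, hm, hgm⟩⟩
    rw [this]
    exact (hgm n).inter (MeasurableSet.iUnion fun m =>
      MeasurableSet.iUnion fun _ => hgm m).compl
  · intro x y hxy hcon
    have hx := Nat.find_spec (hgood x)
    have hy := Nat.find_spec (hgood y)
    have hcon' : Nat.find (hgood x) = Nat.find (hgood y) := hcon
    rw [hcon'] at hx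
    exact hx.2 y hxy hy.1
end Coloring

/-- For every Borel graph of maximum degree `d` and `r ≥ 1`, there is a Borel
colouring with `k := 1 + d·∑_{i<r} (d-1)^i` colours whose colour classes are all
`r`-sparse (distinct same-coloured vertices are at distance greater than `r`). -/
theorem stmt_12 {V : Type*} [MeasurableSpace V] [StandardBorelSpace V]
    (G : SimpleGraph V) (d r : ℕ) (hr : 1 ≤ r)
    (hlf : ∀ x : V, (G.neighborSet x).Finite)
    (hdeg : ∀ x : V, (G.neighborSet x).ncard ≤ d)
    (hE : MeasurableSet {p : V × V | G.Adj p.1 p.2}) :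
    ∃ c : V → Fin (1 + d * ∑ i ∈ Finset.range r, (d - 1) ^ i),
      Measurable c ∧
      ∀ x y : V, x ≠ y → c x = c y → G.Reachable x y → r < G.dist x y := by
  classical
  obtain ⟨ι, hιemb⟩ := MeasureTheory.exists_measurableEmbedding_real (α := V)
  have hι : Measurable ι := hιemb.measurable
  have hinj : Function.Injective ι := hιemb.injective
  set D := d * ∑ i ∈ Finset.range r, (d - 1) ^ i with hD
  set k := 1 + D with hk
  have hk0 : 0 < k := by omega
  set A : V → V → Prop :=
    fun x y => x ≠ y ∧ ∃ s, 1 ≤ s ∧ s ≤ r ∧ ∃ w : G.Walk x y, w.length = s with hA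
  have hAsymm : ∀ x y, A x y → A y x := by
    rintro x y ⟨hne, s, h1, h2, w, hw⟩
    exact ⟨hne.symm, s, h1, h2, w.reverse, by simp [hw]⟩
  have hAne : ∀ x y, A x y → x ≠ y := fun x y h => h.1
  have hAmeas : MeasurableSet {p : V × V | A p.1 p.2} := by
    have h1 : MeasurableSet {p : V × V | p.1 ≠ p.2} := by
      have he : {p : V × V | p.1 ≠ p.2} = {p : V × V | ι p.1 = ι p.2}ᶜ := by
        ext p
        simp only [Set.mem_setOf_eq, Set.mem_compl_iff]
        exact not_congr ⟨fun h => congrArg ι h, fun h => hinj h⟩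
      rw [he]
      exact (measurableSet_eq_fun (hι.comp measurable_fst) (hι.comp measurable_snd)).compl
    have h2 : MeasurableSet
        {p : V × V | ∃ s, 1 ≤ s ∧ s ≤ r ∧ ∃ w : G.Walk p.1 p.2, w.length = s} := by
      have he : {p : V × V | ∃ s, 1 ≤ s ∧ s ≤ r ∧ ∃ w : G.Walk p.1 p.2, w.length = s}
          = ⋃ (s : ℕ) (_ : 1 ≤ s ∧ s ≤ r),
              {p : V × V | ∃ w : G.Walk p.1 p.2, w.length = s} := by
        ext p
        simp only [Set.mem_setOf_eq, Set.mem_iUnion]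
        constructor
        · rintro ⟨s, h1, h2, hw⟩; exact ⟨s, ⟨h1, h2⟩, hw⟩
        · rintro ⟨s, ⟨h1, h2⟩, hw⟩; exact ⟨s, h1, h2, hw⟩
      rw [he]
      exact MeasurableSet.iUnion fun s => MeasurableSet.iUnion fun _ =>
        walkRel_measurable ι hι hinj hE hlf hdeg s
    have he : {p : V × V | A p.1 p.2} = {p : V × V | p.1 ≠ p.2} ∩
        {p : V × V | ∃ s, 1 ≤ s ∧ s ≤ r ∧ ∃ w : G.Walk p.1 p.2, w.length = s} := by
      ext p; simp only [hA, Set.mem_setOf_eq, Set.mem_inter_iff]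
    rw [he]
    exact h1.inter h2
  have hNfin : ∀ x, {y | A x y}.Finite := by
    intro x
    apply Set.Finite.subset (Set.Finite.biUnion (Set.finite_Icc 1 r)
      (fun s _ => walkset_finite hlf s x))
    rintro y ⟨-, s, h1, h2, hw⟩
    exact Set.mem_biUnion (Set.mem_Icc.mpr ⟨h1, h2⟩) hw
  have hNcard : ∀ x, {y | A x y}.ncard ≤ D := by
    intro x
    have hb := ball_card (G := G) hlf hdeg x r
    have he : {y | A x y} = {y | y ≠ x ∧ ∃ s, 1 ≤ s ∧ s ≤ r ∧ ∃ w : G.Walk x y, w.length = s} := by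
      ext y
      simp only [hA, Set.mem_setOf_eq]
      rw [ne_comm]
    rw [he, hD]
    exact hb
  obtain ⟨c0, hc0meas, hc0prop⟩ :=
    exists_countable_coloring ι hι hinj hAmeas hNfin hNcard hAne
  have hcardk : ∀ x, {y | A x y}.ncard < k := fun x => by
    have := hNcard x; omega
  -- measurability of the greedy colouring, by strong induction
  have hmeas_greedy : ∀ n j, MeasurableSet {x | greedy A c0 k n x = j} := by
    intro n
    induction n using Nat.strong_induction_on with
    | _ n ih =>
      intro j
      have hBmeas : ∀ j' : ℕ,
          MeasurableSet {y | ∃ _h : c0 y < n, greedy A c0 k (c0 y) y = j'} := by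
        intro j'
        have he : {y | ∃ _h : c0 y < n, greedy A c0 k (c0 y) y = j'}
            = ⋃ (m : ℕ) (_ : m < n), ({y | c0 y = m} ∩ {y | greedy A c0 k m y = j'}) := by
          ext y
          simp only [Set.mem_setOf_eq, Set.mem_iUnion, Set.mem_inter_iff]
          constructor
          · rintro ⟨h, hg⟩; exact ⟨c0 y, h, rfl, hg⟩
          · rintro ⟨m, hm, hcm, hg⟩
            refine ⟨hcm ▸ hm, ?_⟩
            rw [hcm]; exact hg
        rw [he]
        exact MeasurableSet.iUnion fun m => MeasurableSet.iUnion fun hm =>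
          (hc0meas m).inter (ih m hm j')
      have hPred : ∀ j' : ℕ, MeasurableSet
          {x | ∃ y, A x y ∧ ∃ _h : c0 y < n, greedy A c0 k (c0 y) y = j'} := by
        intro j'
        exact measurable_star ι hι hinj hAmeas hNfin hNcard (hBmeas j')
      by_cases hj : j < k
      · have he : {x | greedy A c0 k n x = j} =
            {x | ∃ y, A x y ∧ ∃ _h : c0 y < n, greedy A c0 k (c0 y) y = j}ᶜ ∩
              ⋂ (j' : ℕ) (_ : j' < j),
                {x | ∃ y, A x y ∧ ∃ _h : c0 y < n, greedy A c0 k (c0 y) y = j'} := by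
          ext x
          have hiff := greedyF_eq_iff (A := A) (c0 := c0) (k := k) (n := n)
            (prev := fun m _ => greedy A c0 k m) (x := x)
            (greedy_exists_free (c0 := c0) (n := n) (hNfin x) (hcardk x)) j
          rw [Set.mem_setOf_eq, greedy_unfold A c0 k n, hiff]
          simp only [Set.mem_inter_iff, Set.mem_compl_iff, Set.mem_setOf_eq, Set.mem_iInter]
          constructor
          · rintro ⟨-, h2, h3⟩; exact ⟨h2, fun j' hj' => h3 j' hj'⟩
          · rintro ⟨h2, h3⟩; exact ⟨hj, h2, fun j' hj' => h3 j' hj'⟩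
        rw [he]
        exact (hPred j).compl.inter
          (MeasurableSet.iInter fun j' => MeasurableSet.iInter fun _ => hPred j')
      · have he : {x | greedy A c0 k n x = j} = ∅ := by
          ext x
          simp only [Set.mem_setOf_eq, Set.mem_empty_iff_false, iff_false]
          intro hcon
          have := greedy_lt (A := A) (c0 := c0) hk0 n x
          omega
        rw [he]
        exact MeasurableSet.empty
  -- the colouring
  refine ⟨fun x => (⟨greedy A c0 k (c0 x) x, greedy_lt hk0 (c0 x) x⟩ : Fin k), ?_, ?_⟩
  · apply measurable_to_countable'
    intro a
    have he : (fun x => (⟨greedy A c0 k (c0 x) x, greedy_lt hk0 (c0 x) x⟩ : Fin k)) ⁻¹' {a}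
        = ⋃ (n : ℕ), ({x | c0 x = n} ∩ {x | greedy A c0 k n x = (a : ℕ)}) := by
      ext x
      simp only [Set.mem_preimage, Set.mem_singleton_iff, Set.mem_iUnion, Set.mem_inter_iff,
        Set.mem_setOf_eq, Fin.ext_iff]
      constructor
      · intro h; exact ⟨c0 x, rfl, h⟩
      · rintro ⟨n, hn, hg⟩; rw [hn]; exact hg
    rw [he]
    exact MeasurableSet.iUnion fun n => (hc0meas n).inter (hmeas_greedy n (a : ℕ))
  · intro x y hxy hcxy hreach
    by_contra hdist
    push_neg at hdist
    have hAxy : A x y := by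
      refine ⟨hxy, G.dist x y, ?_, hdist, ?_⟩
      · exact hreach.pos_dist_of_ne hxy
      · exact hreach.exists_walk_length_eq_dist
    have hval : greedy A c0 k (c0 x) x = greedy A c0 k (c0 y) y := by
      have := congrArg Fin.val hcxy
      exact this
    have hc0ne : c0 x ≠ c0 y := hc0prop x y hAxy
    rcases Nat.lt_or_ge (c0 y) (c0 x) with hlt | hge
    · exact greedy_proper (n := c0 x) (hNfin x) (hcardk x) ⟨y, hAxy, hlt, hval.symm⟩
    · have hlt : c0 x < c0 y := by omega
      exact greedy_proper (n := c0 y) (hNfin y) (hcardk y)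
        ⟨x, hAsymm x y hAxy, hlt, hval⟩
end

section
/- The edge set of every locally finite Borel graph 𝒢 = (V, E, 𝓑) can be partitioned into countably many Borel matchings. -/
/-!
Proof that the edge set of a locally finite Borel graph partitions into countably many
Borel matchings, via a Novikov separation theorem, a Lusin–Novikov style decomposition
into Borel partial-function graphs, and a Feldman–Moore style construction.
-/

open Set Function MeasureTheory PiNat

namespace Stmt13Aux

set_option maxHeartbeats 1000000

variable {α : Type*}

def Sep [MeasurableSpace α] (C : ℕ → Set α) : Prop :=
  ∃ B : ℕ → Set α, (∀ n, MeasurableSet (B n)) ∧ (∀ n, C n ⊆ B n) ∧ (⋂ n, B n) = ∅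

theorem Sep.mono [MeasurableSpace α] {C C' : ℕ → Set α} (h : Sep C') (hle : ∀ n, C n ⊆ C' n) :
    Sep C := by
  obtain ⟨B, h1, h2, h3⟩ := h
  exact ⟨B, h1, fun n => (hle n).trans (h2 n), h3⟩

theorem sep_of_update [MeasurableSpace α] {C : ℕ → Set α} {k : ℕ} {D : ℕ → Set α}
    (hC : C k ⊆ ⋃ i, D i) (h : ∀ i, Sep (Function.update C k (D i))) : Sep C := by
  classical
  choose B hBmeas hBsub hBempty using h
  set W : Set α := ⋃ i, B i k with hW
  set D' : ℕ → Set α := fun i => B i k \ ⋃ j, ⋃ (_ : j < i), B j k with hD'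
  have hD'sub : ∀ i, D' i ⊆ B i k := fun i => diff_subset
  have hWD' : ∀ x, x ∈ W → ∃ i, x ∈ D' i := by
    intro x hx
    rw [hW, mem_iUnion] at hx
    have hex : ∃ i, x ∈ B i k := hx
    refine ⟨Nat.find hex, Nat.find_spec hex, ?_⟩
    simp only [mem_iUnion, not_exists]
    exact fun j hj => Nat.find_min hex hj
  have hD'disj : ∀ i j, i ≠ j → ∀ x, x ∈ D' i → x ∈ D' j → False := by
    intro i j hij x hxi hxj
    rcases lt_or_gt_of_ne hij with hlt | hlt
    · exact hxj.2 (mem_iUnion.2 ⟨i, mem_iUnion.2 ⟨hlt, hxi.1⟩⟩)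
    · exact hxi.2 (mem_iUnion.2 ⟨j, mem_iUnion.2 ⟨hlt, hxj.1⟩⟩)
  refine ⟨fun m => if m = k then W else (⋃ i, (D' i ∩ B i m)) ∪ Wᶜ, ?_, ?_, ?_⟩
  · intro m
    by_cases hm : m = k <;> simp only [hm, if_pos, if_true, if_neg, if_false]
    · exact MeasurableSet.iUnion fun i => hBmeas i k
    · refine MeasurableSet.union (MeasurableSet.iUnion fun i => ?_)
        (MeasurableSet.compl (MeasurableSet.iUnion fun i => hBmeas i k))
      exact (MeasurableSet.diff (hBmeas i k)
        (MeasurableSet.iUnion fun j => MeasurableSet.iUnion fun _ => hBmeas j k)).inter (hBmeas i m)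
  · intro m
    by_cases hm : m = k
    · subst hm
      simp only [if_pos]
      intro x hx
      obtain ⟨i, hi⟩ := mem_iUnion.1 (hC hx)
      have : D i ⊆ B i m := by
        have := hBsub i m
        rwa [Function.update_self] at this
      exact mem_iUnion.2 ⟨i, this hi⟩
    · simp only [if_neg hm]
      intro x hx
      by_cases hxW : x ∈ W
      · obtain ⟨i, hi⟩ := hWD' x hxW
        refine mem_union_left _ (mem_iUnion.2 ⟨i, hi, ?_⟩)
        have := hBsub i m
        rw [Function.update_of_ne hm] at this
        exact this hx
      · exact mem_union_right _ hxW
  · rw [eq_empty_iff_forall_notMem]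
    intro x hx
    have hxW : x ∈ W := by
      have := mem_iInter.1 hx k
      simpa only [if_pos rfl, ↓reduceIte] using this
    obtain ⟨i, hi⟩ := hWD' x hxW
    have : x ∈ ⋂ n, B i n := by
      rw [mem_iInter]
      intro n
      by_cases hn : n = k
      · exact hn ▸ hD'sub i hi
      · have := mem_iInter.1 hx n
        simp only [if_neg hn] at this
        rcases this with h1 | h2
        · obtain ⟨j, hj1, hj2⟩ := mem_iUnion.1 h1
          by_cases hji : j = i
          · exact hji ▸ hj2
          · exact absurd hj1 (fun hj1 => hD'disj j i hji x hj1 hi)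
        · exact absurd hxW h2
    exact (eq_empty_iff_forall_notMem.1 (hBempty i) x) this

/-- Novikov separation theorem for ranges of continuous maps from Baire space. -/
theorem novikov_ranges [TopologicalSpace α] [T2Space α] [MeasurableSpace α]
    [OpensMeasurableSpace α] (f : ℕ → (ℕ → ℕ) → α) (hf : ∀ n, Continuous (f n))
    (hint : (⋂ n, range (f n)) = ∅) : Sep (fun n => range (f n)) := by
  classical
  by_contra hsep
  have I : ∀ (c : ℕ → (ℕ → ℕ) × ℕ) (k : ℕ),
      ¬ Sep (fun n => f n '' cylinder (c n).1 (c n).2) →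
      ∃ x', x' ∈ cylinder (c k).1 (c k).2 ∧
        ¬ Sep (fun n => f n ''
          cylinder ((Function.update c k (x', (c k).2 + 1)) n).1
            ((Function.update c k (x', (c k).2 + 1)) n).2) := by
    intro c k
    contrapose!
    intro H
    apply sep_of_update (k := k)
      (D := fun i => f k '' cylinder (update (c k).1 (c k).2 i) ((c k).2 + 1))
    · rw [← image_iUnion, iUnion_cylinder_update (c k).1 (c k).2]
    · intro i
      have h1 := H (update (c k).1 (c k).2 i) (update_mem_cylinder _ _ _)
      have heq : (fun n => f n ''
          cylinder ((Function.update c k (update (c k).1 (c k).2 i, (c k).2 + 1)) n).1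
            ((Function.update c k (update (c k).1 (c k).2 i, (c k).2 + 1)) n).2)
          = Function.update (fun n => f n '' cylinder (c n).1 (c n).2) k
            (f k '' cylinder (update (c k).1 (c k).2 i) ((c k).2 + 1)) := by
        funext n
        by_cases hn : n = k
        · subst hn; simp
        · simp [Function.update_of_ne hn]
      rw [heq] at h1
      exact h1
  -- the subtype of non-separated cylinder families
  let A := {c : ℕ → (ℕ → ℕ) × ℕ // ¬ Sep (fun n => f n '' cylinder (c n).1 (c n).2)}
  have hstep : ∀ (q : A) (k : ℕ), ∃ q' : A,
      (∀ n, n ≠ k → q'.1 n = q.1 n) ∧ ((q'.1 k).2 = (q.1 k).2 + 1) ∧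
      ((q'.1 k).1 ∈ cylinder ((q.1 k).1) ((q.1 k).2)) := by
    rintro ⟨c, hc⟩ k
    rcases I c k hc with ⟨x', hmem, hns⟩
    refine ⟨⟨Function.update c k (x', (c k).2 + 1), hns⟩, ?_, ?_, ?_⟩
    · intro n hn; exact Function.update_of_ne hn _ _
    · simp
    · simp [hmem]
  choose stepF hstep1 hstep2 hstep3 using hstep
  have hp0 : ¬ Sep (fun n => f n '' cylinder ((fun _ : ℕ => ((fun _ => 0 : ℕ → ℕ), 0)) n).1
      ((fun _ : ℕ => ((fun _ => 0 : ℕ → ℕ), 0)) n).2) := by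
    simpa [cylinder_zero, image_univ] using hsep
  let p : ℕ → A := fun t => Nat.rec ⟨_, hp0⟩ (fun t pt => stepF pt (Nat.unpair t).1) t
  have hps : ∀ t, p (t + 1) = stepF (p t) (Nat.unpair t).1 := fun t => rfl
  set ctr : ℕ → ℕ → (ℕ → ℕ) := fun t n => ((p t).1 n).1 with hctr
  set len : ℕ → ℕ → ℕ := fun t n => ((p t).1 n).2 with hlen
  have hlen_succ' : ∀ t n, len (t + 1) n = ((stepF (p t) (Nat.unpair t).1).1 n).2 :=
    fun t n => rfl
  have hlen_succ : ∀ t n, len (t + 1) n = if n = (Nat.unpair t).1 then len t n + 1 else len t n := by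
    intro t n
    rw [hlen_succ' t n]
    by_cases hn : n = (Nat.unpair t).1
    · rw [if_pos hn, hn]; exact hstep2 (p t) _
    · rw [if_neg hn, hstep1 (p t) _ n hn]
  have hmono : ∀ t n, cylinder (ctr (t+1) n) (len (t+1) n) ⊆ cylinder (ctr t n) (len t n) := by
    intro t n
    by_cases hn : n = (Nat.unpair t).1
    · have h2 : len (t+1) n = len t n + 1 := by rw [hlen_succ t n, if_pos hn]
      have h3 : ctr (t+1) n ∈ cylinder (ctr t n) (len t n) := by
        rw [hn]; exact hstep3 (p t) _
      intro z hz
      rw [mem_cylinder_iff] at hz h3 ⊢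
      intro i hi
      rw [hz i (by omega), h3 i hi]
    · have h4 : (p (t+1)).1 n = (p t).1 n := hstep1 (p t) _ n hn
      have h5 : ctr (t+1) n = ctr t n := congrArg Prod.fst h4
      have h6 : len (t+1) n = len t n := congrArg Prod.snd h4
      rw [h5, h6]
  have hmono' : ∀ s n t, s ≤ t → cylinder (ctr t n) (len t n) ⊆ cylinder (ctr s n) (len s n) := by
    intro s n
    refine Nat.le_induction (fun z hz => hz) ?_
    intro t hst ih
    exact (hmono t n).trans ih
  have hlen_mono : ∀ s n t, s ≤ t → len s n ≤ len t n := by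
    intro s n
    refine Nat.le_induction le_rfl ?_
    intro t hst ih
    rw [hlen_succ t n]
    split <;> omega
  have hlen_unbounded : ∀ n N, ∃ t, N ≤ len t n := by
    intro n N
    induction N with
    | zero => exact ⟨0, Nat.zero_le _⟩
    | succ N ih =>
      obtain ⟨t, ht⟩ := ih
      refine ⟨Nat.pair n t + 1, ?_⟩
      have h1 : t ≤ Nat.pair n t := Nat.right_le_pair n t
      have h2 := hlen_mono t n (Nat.pair n t) h1
      rw [hlen_succ]
      simp [Nat.unpair_pair]
      omega
  have hself : ∀ t n, ctr t n ∈ cylinder (ctr t n) (len t n) := fun t n => self_mem_cylinder _ _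
  have hagree : ∀ s t n j, j < len s n → j < len t n → ctr s n j = ctr t n j := by
    intro s t n j hs ht
    rcases le_total s t with h | h
    · have := hmono' s n t h (hself t n)
      rw [mem_cylinder_iff] at this
      exact (this j hs).symm
    · have := hmono' t n s h (hself s n)
      rw [mem_cylinder_iff] at this
      exact this j ht
  have hYex : ∀ n j, ∃ t, j < len t n := fun n j => hlen_unbounded n (j + 1)
  set y : ℕ → ℕ → ℕ := fun n j => ctr ((hYex n j).choose) n j with hy
  have hagree_y : ∀ t n j, j < len t n → ctr t n j = y n j := by
    intro t n j hj
    exact hagree t ((hYex n j).choose) n j hj ((hYex n j).choose_spec)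
  have hsubY : ∀ t n N, N ≤ len t n → cylinder (ctr t n) (len t n) ⊆ cylinder (y n) N := by
    intro t n N hN z hz
    rw [mem_cylinder_iff] at hz ⊢
    intro i hi
    rw [hz i (by omega), hagree_y t n i (by omega)]
  -- find two indices with distinct limit points
  have hne : ∃ a b, f a (y a) ≠ f b (y b) := by
    by_contra h
    push_neg at h
    have : f 0 (y 0) ∈ ⋂ n, range (f n) := by
      rw [mem_iInter]
      intro n
      rw [h 0 n]
      exact mem_range_self _
    rw [hint] at this
    exact this
  obtain ⟨a, b, hab⟩ := hne
  have haneb : a ≠ b := by rintro rfl; exact hab rfl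
  obtain ⟨u, v, u_open, v_open, hu, hv, huv⟩ := t2_separation hab
  letI : MetricSpace (ℕ → ℕ) := metricSpaceNatNat
  obtain ⟨εa, εapos, hεa⟩ : ∃ ε > 0, Metric.ball (y a) ε ⊆ f a ⁻¹' u :=
    Metric.mem_nhds_iff.1 ((hf a).continuousAt.preimage_mem_nhds (u_open.mem_nhds hu))
  obtain ⟨εb, εbpos, hεb⟩ : ∃ ε > 0, Metric.ball (y b) ε ⊆ f b ⁻¹' v :=
    Metric.mem_nhds_iff.1 ((hf b).continuousAt.preimage_mem_nhds (v_open.mem_nhds hv))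
  obtain ⟨N, hN⟩ : ∃ N : ℕ, (1 / 2 : ℝ) ^ N < min εa εb :=
    exists_pow_lt_of_lt_one (lt_min εapos εbpos) (by norm_num)
  obtain ⟨t1, ht1⟩ := hlen_unbounded a N
  obtain ⟨t2, ht2⟩ := hlen_unbounded b N
  set t := max t1 t2 with htdef
  have hta : N ≤ len t a := le_trans ht1 (hlen_mono t1 a t (le_max_left _ _))
  have htb : N ≤ len t b := le_trans ht2 (hlen_mono t2 b t (le_max_right _ _))
  have hcyl_u : f a '' cylinder (ctr t a) (len t a) ⊆ u := by
    refine Subset.trans (image_mono (hsubY t a N hta)) ?_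
    rw [image_subset_iff]
    refine Subset.trans ?_ hεa
    intro z hz
    have := mem_cylinder_iff_dist_le.1 hz
    exact Metric.mem_ball.2 (lt_of_le_of_lt this (hN.trans_le (min_le_left _ _)))
  have hcyl_v : f b '' cylinder (ctr t b) (len t b) ⊆ v := by
    refine Subset.trans (image_mono (hsubY t b N htb)) ?_
    rw [image_subset_iff]
    refine Subset.trans ?_ hεb
    intro z hz
    have := mem_cylinder_iff_dist_le.1 hz
    exact Metric.mem_ball.2 (lt_of_le_of_lt this (hN.trans_le (min_le_right _ _)))
  refine (p t).2 ⟨fun m => if m = a then u else if m = b then v else univ, ?_, ?_, ?_⟩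
  · intro m
    by_cases hma : m = a
    · simp only [if_pos hma]; exact u_open.measurableSet
    by_cases hmb : m = b
    · simp only [if_neg hma, if_pos hmb]; exact v_open.measurableSet
    · simp only [if_neg hma, if_neg hmb]; exact MeasurableSet.univ
  · intro m
    by_cases hma : m = a
    · subst hma; simp only [if_pos rfl]; exact hcyl_u
    by_cases hmb : m = b
    · subst hmb; simp only [if_neg hma, if_pos rfl]; exact hcyl_v
    · simp only [if_neg hma, if_neg hmb]; exact subset_univ _
  · rw [eq_empty_iff_forall_notMem]
    intro x hx
    have hxu : x ∈ u := by have := mem_iInter.1 hx a; simpa using this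
    have hxv : x ∈ v := by
      have := mem_iInter.1 hx b
      simp only [if_neg (Ne.symm haneb), if_pos rfl] at this
      exact this
    exact (disjoint_left.1 huv) hxu hxv

theorem novikov [TopologicalSpace α] [T2Space α] [MeasurableSpace α] [OpensMeasurableSpace α]
    (s : ℕ → Set α) (hs : ∀ n, AnalyticSet (s n)) (h : (⋂ n, s n) = ∅) :
    ∃ B : ℕ → Set α, (∀ n, MeasurableSet (B n)) ∧ (∀ n, s n ⊆ B n) ∧ (⋂ n, B n) = ∅ := by
  classical
  by_cases hne : ∀ n, (s n).Nonempty
  · have hex : ∀ n, ∃ f : (ℕ → ℕ) → α, Continuous f ∧ range f = s n := by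
      intro n
      have h' := hs n
      rw [MeasureTheory.AnalyticSet] at h'
      rcases h' with h0 | ⟨f, hf, hr⟩
      · exact absurd (hne n) (by rw [h0]; simp)
      · exact ⟨f, hf, hr⟩
    choose f hfc hfr using hex
    obtain ⟨B, h1, h2, h3⟩ := novikov_ranges f hfc (by simp_rw [hfr]; exact h)
    exact ⟨B, h1, fun n => (hfr n) ▸ h2 n, h3⟩
  · push_neg at hne
    obtain ⟨n0, hn0⟩ := hne
    refine ⟨fun n => if s n = ∅ then ∅ else univ, ?_, ?_, ?_⟩
    · intro n
      by_cases h' : s n = ∅ <;> simp only [h', if_pos, if_neg, if_true, if_false]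
      · exact MeasurableSet.empty
      · exact MeasurableSet.univ
    · intro n
      by_cases h' : s n = ∅ <;> simp only [h', if_pos, if_neg, if_true, if_false]
      · exact subset_rfl
      · exact subset_univ _
    · rw [eq_empty_iff_forall_notMem]
      intro x hx
      have := mem_iInter.1 hx n0
      rw [if_pos hn0] at this
      exact this

variable {V : Type*} [MeasurableSpace V] [StandardBorelSpace V] {e : V → ℝ}

/-- From a finset of size `k` inside a set, extract a strictly `e`-monotone `k`-tuple. -/
lemma exists_tuple (hei : Injective e) {k : ℕ} {Wx : Set V} (s : Finset V) (hs : ↑s ⊆ Wx)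
    (hcard : s.card = k) :
    ∃ t : Fin k → V, StrictMono (fun i => e (t i)) ∧ ∀ i, t i ∈ Wx := by
  classical
  have hF : (s.image e).card = k := by
    rw [Finset.card_image_of_injective _ hei, hcard]
  have hmem : ∀ i : Fin k, ∃ v ∈ s, e v = (s.image e).orderEmbOfFin hF i := by
    intro i
    exact Finset.mem_image.1 (Finset.orderEmbOfFin_mem _ hF i)
  choose t ht het using hmem
  refine ⟨t, ?_, fun i => hs (ht i)⟩
  intro i j hij
  show e (t i) < e (t j)
  rw [het i, het j]
  exact ((s.image e).orderEmbOfFin hF).strictMono hij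

/-- The set of pairs `(x, t)` where `t` is a strictly `e`-monotone tuple in the section of `W`
at `x` is measurable. -/
lemma meas_tupleSet (he : Measurable e) {k : ℕ} {W : Set (V × V)} (hW : MeasurableSet W) :
    MeasurableSet {xt : V × (Fin k → V) |
      StrictMono (fun i => e (xt.2 i)) ∧ ∀ i, (xt.1, xt.2 i) ∈ W} := by
  have h1 : {xt : V × (Fin k → V) | StrictMono (fun i => e (xt.2 i))}
      = ⋂ (i : Fin k), ⋂ (j : Fin k), {xt | i < j → e (xt.2 i) < e (xt.2 j)} := by
    ext xt
    simp only [mem_iInter, mem_setOf_eq]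
    exact ⟨fun h i j hij => h hij, fun h i j hij => h i j hij⟩
  have h2 : {xt : V × (Fin k → V) | ∀ i, (xt.1, xt.2 i) ∈ W}
      = ⋂ (i : Fin k), (fun xt : V × (Fin k → V) => (xt.1, xt.2 i)) ⁻¹' W := by
    ext xt; simp [mem_iInter]
  have hproj : ∀ i : Fin k, Measurable (fun xt : V × (Fin k → V) => e (xt.2 i)) :=
    fun i => he.comp ((measurable_pi_apply i).comp measurable_snd)
  have hmap : ∀ i : Fin k, Measurable (fun xt : V × (Fin k → V) => (xt.1, xt.2 i)) :=
    fun i => measurable_fst.prodMk ((measurable_pi_apply i).comp measurable_snd)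
  have : {xt : V × (Fin k → V) |
      StrictMono (fun i => e (xt.2 i)) ∧ ∀ i, (xt.1, xt.2 i) ∈ W}
      = {xt : V × (Fin k → V) | StrictMono (fun i => e (xt.2 i))}
        ∩ {xt | ∀ i, (xt.1, xt.2 i) ∈ W} := rfl
  rw [this, h1, h2]
  refine MeasurableSet.inter ?_ ?_
  · refine MeasurableSet.iInter fun i => MeasurableSet.iInter fun j => ?_
    by_cases hij : i < j
    · have : {xt : V × (Fin k → V) | i < j → e (xt.2 i) < e (xt.2 j)}
          = {xt | e (xt.2 i) < e (xt.2 j)} := by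
        ext xt; simp [hij]
      rw [this]
      exact measurableSet_lt (hproj i) (hproj j)
    · have : {xt : V × (Fin k → V) | i < j → e (xt.2 i) < e (xt.2 j)} = univ := by
        ext xt; simp [hij]
      rw [this]; exact MeasurableSet.univ
  · exact MeasurableSet.iInter fun i => (hmap i) hW

/-- Decomposition of a Borel set with uniformly bounded finite sections into countably many
Borel partial-function graphs. -/
lemma decomp (he : Measurable e) (hei : Injective e) :
    ∀ (n : ℕ) (W : Set (V × V)), MeasurableSet W →
      (∀ (x : V) (t : Fin (n + 1) → V),
        ¬(StrictMono (fun i => e (t i)) ∧ ∀ i, (x, t i) ∈ W)) →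
      ∃ F : ℕ → Set (V × V), (∀ i, MeasurableSet (F i)) ∧ (∀ i, F i ⊆ W) ∧
        (∀ i x y z, (x, y) ∈ F i → (x, z) ∈ F i → y = z) ∧ (⋃ i, F i) = W := by
  classical
  intro n
  induction n with
  | zero =>
    intro W hW h
    have hempty : W = ∅ := by
      rw [eq_empty_iff_forall_notMem]
      rintro ⟨x, y⟩ hxy
      refine h x (fun _ => y) ⟨?_, fun _ => hxy⟩
      intro i j hij
      rw [Fin.lt_def] at hij
      have h1 := i.2
      have h2 := j.2
      omega
    refine ⟨fun _ => ∅, fun _ => MeasurableSet.empty, fun _ => empty_subset _,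
      fun i x y z hy => absurd hy (notMem_empty _), ?_⟩
    rw [hempty]; simp
  | succ n ih =>
    intro W hW h
    set Tw : Set (V × (Fin (n + 1) → V)) :=
      {xt | StrictMono (fun i => e (xt.2 i)) ∧ ∀ i, (xt.1, xt.2 i) ∈ W} with hTw
    have hTwMeas : MeasurableSet Tw := meas_tupleSet he hW
    -- every element of a section is in the range of the unique maximal tuple
    have range_eq : ∀ x (t : Fin (n + 1) → V), (x, t) ∈ Tw →
        ∀ y, (x, y) ∈ W → ∃ i, t i = y := by
      intro x t ht y hy
      by_contra hc
      push_neg at hc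
      have htinj : Injective t := by
        intro i j hij
        by_contra hne
        rcases lt_or_gt_of_ne hne with hlt | hlt
        · exact absurd (congrArg e hij) (ne_of_lt (ht.1 hlt))
        · exact absurd (congrArg e hij).symm (ne_of_lt (ht.1 hlt))
      have hynotin : y ∉ Finset.univ.image t := by
        simp only [Finset.mem_image, Finset.mem_univ, true_and]
        exact fun ⟨i, hi⟩ => hc i hi
      have hcard : (insert y (Finset.univ.image t)).card = n + 2 := by
        rw [Finset.card_insert_of_notMem hynotin,
          Finset.card_image_of_injective _ htinj, Finset.card_univ, Fintype.card_fin]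
      have hsub : ↑(insert y (Finset.univ.image t)) ⊆ {z | (x, z) ∈ W} := by
        intro z hz
        simp only [Finset.coe_insert, Set.mem_insert_iff, Finset.coe_image, Set.mem_image,
          Finset.mem_coe, Finset.mem_univ, true_and] at hz
        rcases hz with rfl | ⟨i, _, rfl⟩
        · exact hy
        · exact ht.2 i
      obtain ⟨t', ht'1, ht'2⟩ := exists_tuple hei _ hsub hcard
      exact h x t' ⟨ht'1, fun i => ht'2 i⟩
    have uniq : ∀ x (t t' : Fin (n + 1) → V), (x, t) ∈ Tw → (x, t') ∈ Tw → t = t' := by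
      intro x t t' ht ht'
      have htinj : Injective fun i => e (t i) := ht.1.injective
      set s : Finset ℝ := Finset.univ.image (fun i => e (t i)) with hsdef
      have hscard : s.card = n + 1 := by
        rw [hsdef, Finset.card_image_of_injective _ htinj, Finset.card_univ, Fintype.card_fin]
      have hmem1 : ∀ i, (fun i => e (t i)) i ∈ s := by
        intro i; simp [hsdef]
      have hmem2 : ∀ i, (fun i => e (t' i)) i ∈ s := by
        intro i
        obtain ⟨j, hj⟩ := range_eq x t ht (t' i) (ht'.2 i)
        simp only [hsdef, Finset.mem_image, Finset.mem_univ, true_and]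
        exact ⟨j, congrArg e hj⟩
      have h1 := Finset.orderEmbOfFin_unique hscard hmem1 ht.1
      have h2 := Finset.orderEmbOfFin_unique hscard hmem2 ht'.1
      funext i
      apply hei
      calc e (t i) = s.orderEmbOfFin hscard i := congrFun h1 i
        _ = e (t' i) := (congrFun h2 i).symm
    have injOnFst : InjOn Prod.fst Tw := by
      rintro ⟨x, t⟩ ht ⟨x', t'⟩ ht' hxx'
      simp only at hxx'
      subst hxx'
      rw [uniq x t t' ht ht']
    set Dset : Set V := Prod.fst '' Tw with hDset
    have hDmeas : MeasurableSet Dset :=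
      hTwMeas.image_of_measurable_injOn measurable_fst injOnFst
    set G : Fin (n + 1) → Set (V × V) := fun i => (fun xt : V × (Fin (n + 1) → V) =>
      (xt.1, xt.2 i)) '' Tw with hG
    have hGmeas : ∀ i, MeasurableSet (G i) := by
      intro i
      refine hTwMeas.image_of_measurable_injOn
        (measurable_fst.prodMk ((measurable_pi_apply i).comp measurable_snd)) ?_
      rintro ⟨x, t⟩ ht ⟨x', t'⟩ ht' hxx'
      simp only [Prod.mk.injEq] at hxx'
      have hx : x = x' := hxx'.1
      subst hx
      rw [uniq x t t' ht ht']
    have hGsub : ∀ i, G i ⊆ W := by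
      rintro i ⟨x, y⟩ ⟨⟨x', t⟩, ht, heq⟩
      simp only [Prod.mk.injEq] at heq
      obtain ⟨rfl, rfl⟩ := heq
      exact ht.2 i
    have hGfun : ∀ i x y z, (x, y) ∈ G i → (x, z) ∈ G i → y = z := by
      intro i x y z hy hz
      obtain ⟨⟨x1, t1⟩, ht1, heq1⟩ := hy
      obtain ⟨⟨x2, t2⟩, ht2, heq2⟩ := hz
      simp only [Prod.mk.injEq] at heq1 heq2
      obtain ⟨rfl, rfl⟩ := heq1
      obtain ⟨hx2, rfl⟩ := heq2
      subst hx2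
      rw [uniq _ t1 t2 ht1 ht2]
    set W' : Set (V × V) := W ∩ (Dsetᶜ ×ˢ (univ : Set V)) with hW'
    have hW'meas : MeasurableSet W' := hW.inter (hDmeas.compl.prod MeasurableSet.univ)
    have hW'bound : ∀ (x : V) (t : Fin (n + 1) → V),
        ¬(StrictMono (fun i => e (t i)) ∧ ∀ i, (x, t i) ∈ W') := by
      rintro x t ⟨hmono, hmem⟩
      have hxD : x ∈ Dset := ⟨(x, t), ⟨hmono, fun i => ((hmem i).1 : _)⟩, rfl⟩
      exact ((hmem 0).2.1 : x ∈ Dsetᶜ) hxD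
    obtain ⟨F', hF'meas, hF'sub, hF'fun, hF'union⟩ := ih W' hW'meas hW'bound
    refine ⟨fun m => if hm : m < n + 1 then G ⟨m, hm⟩ else F' (m - (n + 1)), ?_, ?_, ?_, ?_⟩
    · intro m
      by_cases hm : m < n + 1
      · simp only [dif_pos hm]; exact hGmeas _
      · simp only [dif_neg hm]; exact hF'meas _
    · intro m
      by_cases hm : m < n + 1
      · simp only [dif_pos hm]; exact hGsub _
      · simp only [dif_neg hm]; exact (hF'sub _).trans inter_subset_left
    · intro m x y z hy hz
      by_cases hm : m < n + 1
      · simp only [dif_pos hm] at hy hz; exact hGfun _ x y z hy hz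
      · simp only [dif_neg hm] at hy hz; exact hF'fun _ x y z hy hz
    · ext ⟨x, y⟩
      simp only [mem_iUnion]
      constructor
      · rintro ⟨m, hm⟩
        by_cases hmlt : m < n + 1
        · simp only [dif_pos hmlt] at hm; exact hGsub _ hm
        · simp only [dif_neg hmlt] at hm
          exact ((hF'sub _) hm).1
      · intro hxy
        by_cases hxD : x ∈ Dset
        · obtain ⟨⟨x1, t⟩, ht, heq⟩ := hxD
          simp only at heq
          subst heq
          obtain ⟨i, hi⟩ := range_eq x1 t ht y hxy
          refine ⟨i.1, ?_⟩
          simp only [dif_pos i.2, Fin.eta]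
          exact ⟨(x1, t), ht, by dsimp only; rw [hi]⟩
        · have : (x, y) ∈ W' := ⟨hxy, ⟨hxD, mem_univ _⟩⟩
          rw [← hF'union] at this
          obtain ⟨j, hj⟩ := mem_iUnion.1 this
          refine ⟨(n + 1) + j, ?_⟩
          have hnlt : ¬((n + 1) + j < n + 1) := by omega
          simp only [dif_neg hnlt]
          have : (n + 1) + j - (n + 1) = j := by omega
          rw [this]
          exact hj
/-- **Lusin–Novikov** decomposition: a Borel subset of `V × V` with finite sections is a countable
union of Borel partial-function graphs. -/
lemma graph_decomp {V : Type*} [MeasurableSpace V] [StandardBorelSpace V]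
    (E : Set (V × V)) (hE : MeasurableSet E) (hfin : ∀ x : V, {y | (x, y) ∈ E}.Finite) :
    ∃ F : ℕ → Set (V × V), (∀ i, MeasurableSet (F i)) ∧ (∀ i, F i ⊆ E) ∧
      (∀ i x y z, (x, y) ∈ F i → (x, z) ∈ F i → y = z) ∧ (⋃ i, F i) = E := by
  classical
  obtain ⟨e, he⟩ := exists_measurableEmbedding_real (α := V)
  have hei : Injective e := he.injective
  letI := upgradeStandardBorel V
  set S : ℕ → Set V := fun m => Prod.fst '' {xt : V × (Fin m → V) |
    StrictMono (fun i => e (xt.2 i)) ∧ ∀ i, (xt.1, xt.2 i) ∈ E} with hS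
  have hSanalytic : ∀ m, AnalyticSet (S m) := fun m =>
    ((meas_tupleSet he.measurable hE).analyticSet).image_of_continuous continuous_fst
  have hS0 : S 0 = univ := by
    rw [eq_univ_iff_forall]
    intro x
    exact ⟨(x, fun i => i.elim0), ⟨fun i => i.elim0, fun i => i.elim0⟩, rfl⟩
  have hSint : (⋂ m, S m) = ∅ := by
    rw [eq_empty_iff_forall_notMem]
    intro x hx
    set s : Finset V := (hfin x).toFinset with hsdef
    have hxS := mem_iInter.1 hx (s.card + 1)
    obtain ⟨⟨x', t⟩, ⟨hmono, hmem⟩, hfst⟩ := hxS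
    simp only at hfst
    subst hfst
    have htinj : Injective t := by
      intro i j hij
      by_contra hne
      rcases lt_or_gt_of_ne hne with hlt | hlt
      · exact absurd (congrArg e hij) (ne_of_lt (hmono hlt))
      · exact absurd (congrArg e hij).symm (ne_of_lt (hmono hlt))
    have hcard : (Finset.univ : Finset (Fin (s.card + 1))).card ≤ s.card := by
      refine Finset.card_le_card_of_injOn t ?_ ?_
      · intro i _
        rw [hsdef, Finset.mem_coe, Set.Finite.mem_toFinset]
        exact hmem i
      · intro i _ j _ hij
        exact htinj hij
    rw [Finset.card_univ, Fintype.card_fin] at hcard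
    omega
  obtain ⟨B, hBmeas, hBsub, hBint⟩ := novikov S hSanalytic hSint
  set X : ℕ → Set V := fun n => (B (n + 1))ᶜ with hX
  have hXmeas : ∀ n, MeasurableSet (X n) := fun n => (hBmeas (n + 1)).compl
  have hXbound : ∀ n x, x ∈ X n → ∀ t : Fin (n + 1) → V,
      ¬(StrictMono (fun i => e (t i)) ∧ ∀ i, (x, t i) ∈ E) := by
    intro n x hx t ⟨h1, h2⟩
    exact hx (hBsub (n + 1) ⟨(x, t), ⟨h1, h2⟩, rfl⟩)
  have hXcov : ∀ x, ∃ n, x ∈ X n := by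
    intro x
    have : x ∉ ⋂ m, B m := by rw [hBint]; exact notMem_empty x
    rw [mem_iInter] at this
    push_neg at this
    obtain ⟨m, hm⟩ := this
    match m with
    | 0 => exact absurd (hBsub 0 (by rw [hS0]; exact mem_univ x)) hm
    | k + 1 => exact ⟨k, hm⟩
  set P : ℕ → Set V := fun n => X n \ ⋃ j, ⋃ (_ : j < n), X j with hP
  have hPmeas : ∀ n, MeasurableSet (P n) :=
    fun n => (hXmeas n).diff (MeasurableSet.iUnion fun j =>
      MeasurableSet.iUnion fun _ => hXmeas j)
  have hPcov : ∀ x, ∃ n, x ∈ P n := by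
    intro x
    obtain ⟨n, hn⟩ := hXcov x
    have hex : ∃ n, x ∈ X n := ⟨n, hn⟩
    refine ⟨Nat.find hex, Nat.find_spec hex, ?_⟩
    simp only [mem_iUnion, not_exists]
    exact fun j hj => Nat.find_min hex hj
  set W : ℕ → Set (V × V) := fun n => E ∩ (P n ×ˢ (univ : Set V)) with hW
  have hWmeas : ∀ n, MeasurableSet (W n) :=
    fun n => hE.inter ((hPmeas n).prod MeasurableSet.univ)
  have hWbound : ∀ n (x : V) (t : Fin (n + 1) → V),
      ¬(StrictMono (fun i => e (t i)) ∧ ∀ i, (x, t i) ∈ W n) := by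
    rintro n x t ⟨h1, h2⟩
    have hxP : x ∈ P n := (h2 0).2.1
    exact hXbound n x hxP.1 t ⟨h1, fun i => (h2 i).1⟩
  have hdec : ∀ n, ∃ F : ℕ → Set (V × V), (∀ i, MeasurableSet (F i)) ∧ (∀ i, F i ⊆ W n) ∧
      (∀ i x y z, (x, y) ∈ F i → (x, z) ∈ F i → y = z) ∧ (⋃ i, F i) = W n :=
    fun n => decomp he.measurable hei n (W n) (hWmeas n) (hWbound n)
  choose FF hFFmeas hFFsub hFFfun hFFunion using hdec
  refine ⟨fun m => FF (Nat.unpair m).1 (Nat.unpair m).2, fun m => hFFmeas _ _,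
    fun m => (hFFsub _ _).trans inter_subset_left,
    fun m => hFFfun _ _, ?_⟩
  ext ⟨x, y⟩
  simp only [mem_iUnion]
  constructor
  · rintro ⟨m, hm⟩
    exact ((hFFsub _ _) hm).1
  · intro hxy
    obtain ⟨n, hn⟩ := hPcov x
    have : (x, y) ∈ W n := ⟨hxy, hn, mem_univ _⟩
    rw [← hFFunion n] at this
    obtain ⟨i, hi⟩ := mem_iUnion.1 this
    exact ⟨Nat.pair n i, by rw [Nat.unpair_pair]; exact hi⟩
end Stmt13Aux

open Stmt13Aux in
set_option maxHeartbeats 2000000 in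
/-- The edge set of every locally finite Borel graph can be partitioned into
countably many Borel matchings. -/
theorem stmt_13 {V : Type*} [MeasurableSpace V] [StandardBorelSpace V]
    (G : SimpleGraph V) (hlf : ∀ x : V, (G.neighborSet x).Finite)
    (hE : MeasurableSet {p : V × V | G.Adj p.1 p.2}) :
    ∃ M : ℕ → Set (V × V),
      (∀ n, MeasurableSet (M n)) ∧
      (∀ n, ∀ p ∈ M n, (p.2, p.1) ∈ M n) ∧
      (∀ n, ∀ x y z : V, (x, y) ∈ M n → (x, z) ∈ M n → y = z) ∧
      (Pairwise fun m n => Disjoint (M m) (M n)) ∧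
      (⋃ n, M n) = {p : V × V | G.Adj p.1 p.2} := by
  classical
  set E : Set (V × V) := {p : V × V | G.Adj p.1 p.2} with hEdef
  have hEsymm : ∀ p : V × V, p ∈ E → (p.2, p.1) ∈ E := fun p hp => hp.symm
  have hfin : ∀ x : V, {y | (x, y) ∈ E}.Finite := hlf
  obtain ⟨F, hFmeas, hFsub, hFfun, hFunion⟩ := graph_decomp E hE hfin
  obtain ⟨e, he⟩ := exists_measurableEmbedding_real (α := V)
  have hei : Function.Injective e := he.injective
  set M0 : ℕ → ℕ → ℚ → Set (V × V) := fun a b q =>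
    {p | (p ∈ F a ∧ Prod.swap p ∈ F b ∧ e p.1 < (q : ℝ) ∧ (q : ℝ) < e p.2) ∨
         (Prod.swap p ∈ F a ∧ p ∈ F b ∧ e p.2 < (q : ℝ) ∧ (q : ℝ) < e p.1)} with hM0
  have hM0meas : ∀ a b q, MeasurableSet (M0 a b q) := by
    intro a b q
    have hswap : Measurable (Prod.swap : V × V → V × V) := measurable_swap
    have h1 : Measurable fun p : V × V => e p.1 := he.measurable.comp measurable_fst
    have h2 : Measurable fun p : V × V => e p.2 := he.measurable.comp measurable_snd
    refine MeasurableSet.union ?_ ?_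
    · exact ((hFmeas a).inter ((hswap (hFmeas b)).inter
        ((h1 measurableSet_Iio).inter (h2 measurableSet_Ioi))))
    · exact ((hswap (hFmeas a)).inter ((hFmeas b).inter
        ((h2 measurableSet_Iio).inter (h1 measurableSet_Ioi))))
  have hM0symm : ∀ a b q p, p ∈ M0 a b q → Prod.swap p ∈ M0 a b q := by
    rintro a b q ⟨x, y⟩ (⟨h1, h2, h3, h4⟩ | ⟨h1, h2, h3, h4⟩)
    · exact Or.inr ⟨h1, h2, h3, h4⟩
    · exact Or.inl ⟨h1, h2, h3, h4⟩
  have hM0match : ∀ a b q (x y z : V), (x, y) ∈ M0 a b q → (x, z) ∈ M0 a b q → y = z := by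
    rintro a b q x y z (⟨h1, h2, h3, h4⟩ | ⟨h1, h2, h3, h4⟩)
        (⟨g1, g2, g3, g4⟩ | ⟨g1, g2, g3, g4⟩)
    · exact hFfun a x y z h1 g1
    · exact absurd g4 (not_lt.2 (le_of_lt h3))
    · exact absurd h4 (not_lt.2 (le_of_lt g3))
    · exact hFfun b x y z h2 g2
  have hM0sub : ∀ a b q, M0 a b q ⊆ E := by
    rintro a b q ⟨x, y⟩ (⟨h1, _, _, _⟩ | ⟨_, h2, _, _⟩)
    · exact hFsub a h1
    · exact hFsub b h2
  have hM0cov : ∀ p ∈ E, ∃ a b q, p ∈ M0 a b q := by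
    rintro ⟨x, y⟩ hp
    have hy : (x, y) ∈ ⋃ i, F i := by rw [hFunion]; exact hp
    have hx : (y, x) ∈ ⋃ i, F i := by rw [hFunion]; exact hEsymm _ hp
    obtain ⟨a, ha⟩ := Set.mem_iUnion.1 hy
    obtain ⟨b, hb⟩ := Set.mem_iUnion.1 hx
    have hne : x ≠ y := G.ne_of_adj hp
    have hene : e x ≠ e y := fun h => hne (hei h)
    rcases lt_or_gt_of_ne hene with hlt | hlt
    · obtain ⟨q, hq1, hq2⟩ := exists_rat_btwn hlt
      exact ⟨a, b, q, Or.inl ⟨ha, hb, hq1, hq2⟩⟩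
    · obtain ⟨q, hq1, hq2⟩ := exists_rat_btwn hlt
      exact ⟨b, a, q, Or.inr ⟨hb, ha, hq1, hq2⟩⟩
  -- reindex by ℕ
  obtain ⟨d, hd⟩ := exists_surjective_nat (ℕ × ℕ × ℚ)
  set M1 : ℕ → Set (V × V) := fun m => M0 (d m).1 (d m).2.1 (d m).2.2 with hM1
  have hM1meas : ∀ m, MeasurableSet (M1 m) := fun m => hM0meas _ _ _
  have hM1symm : ∀ m p, p ∈ M1 m → Prod.swap p ∈ M1 m := fun m => hM0symm _ _ _
  have hM1match : ∀ m (x y z : V), (x, y) ∈ M1 m → (x, z) ∈ M1 m → y = z :=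
    fun m => hM0match _ _ _
  have hM1sub : ∀ m, M1 m ⊆ E := fun m => hM0sub _ _ _
  have hM1union : (⋃ m, M1 m) = E := by
    apply Set.Subset.antisymm
    · exact Set.iUnion_subset hM1sub
    · intro p hp
      obtain ⟨a, b, q, hm⟩ := hM0cov p hp
      obtain ⟨m, hmd⟩ := hd ((a, b, q) : ℕ × ℕ × ℚ)
      exact Set.mem_iUnion.2 ⟨m, show p ∈ M0 (d m).1 (d m).2.1 (d m).2.2 by
        rw [hmd]; exact hm⟩
  -- disjointify
  refine ⟨fun m => M1 m \ ⋃ j, ⋃ (_ : j < m), M1 j, ?_, ?_, ?_, ?_, ?_⟩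
  · intro m
    exact (hM1meas m).diff (MeasurableSet.iUnion fun j =>
      MeasurableSet.iUnion fun _ => hM1meas j)
  · rintro m p ⟨hp1, hp2⟩
    refine ⟨hM1symm m p hp1, ?_⟩
    simp only [Set.mem_iUnion, not_exists] at hp2 ⊢
    intro j hj hswap
    exact hp2 j hj (by simpa using hM1symm j _ hswap)
  · intro m x y z hy hz
    exact hM1match m x y z hy.1 hz.1
  · intro m n hmn
    rcases lt_or_gt_of_ne hmn with hlt | hlt
    · rw [Set.disjoint_left]
      rintro p ⟨hp1, _⟩ ⟨_, hp2⟩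
      simp only [Set.mem_iUnion, not_exists] at hp2
      exact hp2 m hlt hp1
    · rw [Set.disjoint_right]
      rintro p ⟨hp1, _⟩ ⟨_, hp2⟩
      simp only [Set.mem_iUnion, not_exists] at hp2
      exact hp2 n hlt hp1
  · apply Set.Subset.antisymm
    · refine Set.iUnion_subset fun m => ?_
      exact (Set.diff_subset).trans (hM1sub m)
    · intro p hp
      rw [← hM1union] at hp
      have hex : ∃ m, p ∈ M1 m := Set.mem_iUnion.1 hp
      refine Set.mem_iUnion.2 ⟨Nat.find hex, Nat.find_spec hex, ?_⟩
      simp only [Set.mem_iUnion, not_exists]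
      exact fun j hj => Nat.find_min hex hj
end

section
/- Every Borel graph 𝒢 with finite maximum degree d satisfies χ'_B(𝒢) ≤ 2d − 1, i.e. there exists a symmetric Borel map c : E → {0,…,2d−2} such that any two distinct edges sharing a vertex get different colours. -/
open MeasureTheory Set Function


lemma graph_decomp {V : Type*} [MeasurableSpace V] [StandardBorelSpace V] (k : ℕ)
    (B : Set (V × ℝ)) (hB : MeasurableSet B)
    (hfin : ∀ x : V, {t | (x, t) ∈ B}.Finite)
    (hcard : ∀ x : V, {t | (x, t) ∈ B}.ncard ≤ k) :
    ∃ (D : Fin k → Set V) (g : Fin k → V → ℝ),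
      (∀ i, MeasurableSet (D i)) ∧ (∀ i, Measurable (g i)) ∧
      (∀ x t, (x, t) ∈ B ↔ ∃ i, x ∈ D i ∧ g i x = t) := by
  induction k generalizing B with
  | zero =>
    refine ⟨Fin.elim0, Fin.elim0, (fun i => i.elim0), (fun i => i.elim0), fun x t => ?_⟩
    constructor
    · intro ht
      have h0 : {t | (x, t) ∈ B} = ∅ := (Set.ncard_eq_zero (hfin x)).1 (Nat.le_zero.1 (hcard x))
      exact absurd h0 (Set.nonempty_iff_ne_empty.1 ⟨t, ht⟩)
    · rintro ⟨i, -⟩; exact i.elim0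
  | succ k ih =>
    classical
    set W : Set (V × (Fin (k+1) → ℝ)) :=
      {q | StrictMono q.2 ∧ ∀ i, (q.1, q.2 i) ∈ B} with hWdef
    have hWm : MeasurableSet W := by
      have : W = (⋂ (i : Fin (k+1)) (j : Fin (k+1)), {q : V × (Fin (k+1) → ℝ) | i < j → q.2 i < q.2 j}) ∩
          ⋂ (i : Fin (k+1)), {q : V × (Fin (k+1) → ℝ) | (q.1, q.2 i) ∈ B} := by
        ext q
        simp only [hWdef, mem_setOf_eq, mem_inter_iff, mem_iInter, StrictMono]
      rw [this]
      refine MeasurableSet.inter (MeasurableSet.iInter fun i => MeasurableSet.iInter fun j => ?_)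
        (MeasurableSet.iInter fun i => ?_)
      · by_cases hij : i < j
        · simp only [hij, true_implies]
          exact measurableSet_lt (measurable_snd.eval) (measurable_snd.eval)
        · simp only [hij, false_implies, setOf_true]
          exact MeasurableSet.univ
      · exact (measurable_fst.prodMk measurable_snd.eval) hB
    haveI : StandardBorelSpace W := hWm.standardBorel
    set φ : W → V := fun w => w.1.1 with hφdef
    have hφm : Measurable φ := by
      rw [hφdef]; exact measurable_subtype_coe.fst
    -- the range of the enumeration is the whole section
    have hrange : ∀ w : W, range w.1.2 = {t | (w.1.1, t) ∈ B} := by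
      rintro ⟨⟨x, v⟩, hmono, hmem⟩
      refine Set.eq_of_subset_of_ncard_le ?_ ?_ (hfin x)
      · rintro t ⟨i, rfl⟩; exact hmem i
      · have : (range v).ncard = k + 1 := by
          rw [← Set.image_univ, Set.ncard_image_of_injective _ hmono.injective,
            Set.ncard_univ, Nat.card_eq_fintype_card, Fintype.card_fin]
        rw [this]; exact hcard x
    have hφinj : Injective φ := by
      rintro w w' h
      have h : (↑w : V × (Fin (k+1) → ℝ)).1 = (↑w' : V × (Fin (k+1) → ℝ)).1 := h
      haveI : WellFoundedLT (Fin (k+1)) := Finite.to_wellFoundedLT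
      have h1 : range (↑w : V × (Fin (k+1) → ℝ)).2 = range (↑w' : V × (Fin (k+1) → ℝ)).2 := by
        rw [hrange w, hrange w', h]
      have h2 : (↑w : V × (Fin (k+1) → ℝ)).2 = (↑w' : V × (Fin (k+1) → ℝ)).2 :=
        (w.2.1.range_inj w'.2.1).1 h1
      exact Subtype.ext (Prod.ext h h2)
    have hemb : MeasurableEmbedding φ := hφm.measurableEmbedding hφinj
    set A : Set V := range φ with hAdef
    have hAm : MeasurableSet A := hemb.measurableSet_range
    set u : V → (Fin (k+1) → ℝ) :=
      Function.extend φ (fun w => w.1.2) (fun _ _ => 0) with hudef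
    have hum : Measurable u :=
      hemb.measurable_extend measurable_subtype_coe.snd measurable_const
    have hu : ∀ w : W, u (φ w) = w.1.2 := fun w => hφinj.extend_apply _ _ w
    have huA : ∀ x ∈ A, range (u x) = {t | (x, t) ∈ B} := by
      rintro x ⟨w, rfl⟩
      rw [hu w]; exact hrange w
    have hAiff : ∀ x ∈ A, ∀ t, ((x, t) ∈ B ↔ ∃ i, u x i = t) := by
      intro x hx t
      rw [show ((x,t) ∈ B) = (t ∈ {t | (x,t) ∈ B}) from rfl, ← huA x hx]
      exact Iff.rfl
    -- membership in A when the section has full size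
    have hfull : ∀ x : V, {t | (x, t) ∈ B}.ncard = k + 1 → x ∈ A := by
      intro x hx
      have hs : ((hfin x).toFinset).card = k + 1 := by
        rw [← Set.ncard_eq_toFinset_card _ (hfin x)]; exact hx
      refine ⟨⟨⟨x, fun i => (hfin x).toFinset.orderEmbOfFin hs i⟩, ?_, ?_⟩, rfl⟩
      · exact ((hfin x).toFinset.orderEmbOfFin hs).strictMono
      · intro i
        have h2 : ((hfin x).toFinset.orderEmbOfFin hs i) ∈ (hfin x).toFinset :=
          Finset.orderEmbOfFin_mem _ hs i
        rw [Set.Finite.mem_toFinset] at h2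
        exact h2
    have hnotA : ∀ x ∉ A, {t | (x, t) ∈ B}.ncard ≤ k := by
      intro x hx
      rcases Nat.lt_or_ge {t | (x, t) ∈ B}.ncard (k+1) with h | h
      · omega
      · exact absurd (hfull x (le_antisymm (hcard x) h)) hx
    -- the remainder
    set B' : Set (V × ℝ) := B ∩ (fun p : V × ℝ => p.1) ⁻¹' Aᶜ with hB'def
    have hB'm : MeasurableSet B' := hB.inter (measurable_fst hAm.compl)
    have hB'sec : ∀ x : V, {t | (x, t) ∈ B'} = if x ∈ A then ∅ else {t | (x, t) ∈ B} := by
      intro x; ext t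
      by_cases hx : x ∈ A <;> simp [hB'def, hx]
    obtain ⟨D', g', hD'm, hg'm, hiff'⟩ := ih B' hB'm
      (fun x => by rw [hB'sec x]; split <;> [exact finite_empty; exact hfin x])
      (fun x => by
        rw [hB'sec x]; split
        · simp
        · next hx => exact hnotA x hx)
    refine ⟨Fin.snoc (fun j => A ∪ (D' j \ A)) A,
      Fin.snoc (fun j => A.piecewise (fun x => u x j.castSucc) (g' j)) (fun x => u x (Fin.last k)),
      ?_, ?_, ?_⟩
    · intro i
      refine Fin.lastCases ?_ (fun j => ?_) i
      · simp only [Fin.snoc_last]; exact hAm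
      · simp only [Fin.snoc_castSucc]
        exact hAm.union ((hD'm j).diff hAm)
    · intro i
      refine Fin.lastCases ?_ (fun j => ?_) i
      · simp only [Fin.snoc_last]
        exact (measurable_pi_apply _).comp hum
      · simp only [Fin.snoc_castSucc]
        exact Measurable.piecewise hAm ((measurable_pi_apply _).comp hum) (hg'm j)
    · intro x t
      by_cases hx : x ∈ A
      · rw [hAiff x hx t]
        constructor
        · rintro ⟨i, rfl⟩
          refine Fin.lastCases ?_ (fun j => ?_) i
          · exact ⟨Fin.last k, by simp [hx]⟩
          · exact ⟨j.castSucc, by simp [hx, Set.piecewise_eq_of_mem _ _ _ hx]⟩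
        · rintro ⟨i, hi, ht⟩
          refine Fin.lastCases ?_ (fun j hi ht => ?_) i hi ht
          · intro hi ht; exact ⟨Fin.last k, by simpa using ht⟩
          · refine ⟨j.castSucc, ?_⟩
            simpa [Set.piecewise_eq_of_mem _ _ _ hx] using ht
      · have hBB' : ((x, t) ∈ B) ↔ ((x, t) ∈ B') := by simp [hB'def, hx]
        rw [hBB', hiff' x t]
        constructor
        · rintro ⟨j, hj, ht⟩
          refine ⟨j.castSucc, ?_, ?_⟩
          · simp only [Fin.snoc_castSucc]; exact Or.inr ⟨hj, hx⟩
          · simp only [Fin.snoc_castSucc]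
            rw [Set.piecewise_eq_of_notMem _ _ _ hx]; exact ht
        · rintro ⟨i, hi, ht⟩
          refine Fin.lastCases ?_ (fun j hi ht => ?_) i hi ht
          · intro hi _; simp only [Fin.snoc_last] at hi; exact absurd hi hx
          · simp only [Fin.snoc_castSucc] at hi ht
            rcases hi with hi | hi
            · exact absurd hi hx
            · rw [Set.piecewise_eq_of_notMem _ _ _ hx] at ht
              exact ⟨j, hi.1, ht⟩


namespace BECaux
variable {V : Type*} (dd : ℕ) (D : Fin dd → Set V) (F : Fin dd → V → V) (lvl : V × V → ℕ)

/-- Colours forbidden for the pair `p` at stage `n`: colours already assigned (at stages `< n`)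
to edges sharing an endpoint with `p`. -/
def colSet (h : ℕ → V × V → ℕ) (n : ℕ) (p : V × V) : Set ℕ :=
  {c | (∃ i, p.1 ∈ D i ∧ F i p.1 ≠ p.2 ∧ lvl (p.1, F i p.1) < n ∧
          h (lvl (p.1, F i p.1)) (p.1, F i p.1) = c) ∨
       (∃ i, p.2 ∈ D i ∧ F i p.2 ≠ p.1 ∧ lvl (p.2, F i p.2) < n ∧
          h (lvl (p.2, F i p.2)) (p.2, F i p.2) = c)}

noncomputable def hist : ℕ → ℕ → V × V → ℕ
  | 0 => fun _ _ => 0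
  | n+1 => fun m p =>
      if m = n then sInf {c | c ∉ colSet dd D F lvl (hist n) n p}
      else hist n m p

noncomputable def col (n : ℕ) : V × V → ℕ := hist dd D F lvl (n+1) n

lemma colSet_congr {h h' : ℕ → V × V → ℕ} {n : ℕ} {p : V × V}
    (hh : ∀ m, m < n → h m = h' m) :
    colSet dd D F lvl h n p = colSet dd D F lvl h' n p := by
  ext c
  constructor <;> rintro (⟨i, h1, h2, h3, h4⟩ | ⟨i, h1, h2, h3, h4⟩)
  · exact Or.inl ⟨i, h1, h2, h3, by rw [← hh _ h3]; exact h4⟩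
  · exact Or.inr ⟨i, h1, h2, h3, by rw [← hh _ h3]; exact h4⟩
  · exact Or.inl ⟨i, h1, h2, h3, by rw [hh _ h3]; exact h4⟩
  · exact Or.inr ⟨i, h1, h2, h3, by rw [hh _ h3]; exact h4⟩

lemma hist_coh : ∀ n m, m < n → hist dd D F lvl n m = col dd D F lvl m := by
  intro n
  induction n with
  | zero => exact fun m hm => absurd hm (Nat.not_lt_zero m)
  | succ n ih =>
    intro m hm
    rcases Nat.lt_succ_iff_lt_or_eq.1 hm with h | rfl
    · funext p
      show (if m = n then _ else hist dd D F lvl n m p) = _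
      rw [if_neg (Nat.ne_of_lt h), ih m h]
    · funext p
      show (if m = m then sInf {c | c ∉ colSet dd D F lvl (hist dd D F lvl m) m p} else _) = _
      rw [if_pos rfl]
      show _ = hist dd D F lvl (m+1) m p
      show _ = (if m = m then sInf {c | c ∉ colSet dd D F lvl (hist dd D F lvl m) m p} else hist dd D F lvl m m p)
      rw [if_pos rfl]

lemma col_eq (n : ℕ) (p : V × V) :
    col dd D F lvl n p = sInf {c | c ∉ colSet dd D F lvl (col dd D F lvl) n p} := by
  show (if n = n then sInf {c | c ∉ colSet dd D F lvl (hist dd D F lvl n) n p} else _) = _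
  rw [if_pos rfl, colSet_congr dd D F lvl (fun m hm => hist_coh dd D F lvl n m hm)]

lemma colSet_finite (h : ℕ → V × V → ℕ) (n : ℕ) (p : V × V) :
    (colSet dd D F lvl h n p).Finite := by
  refine Set.Finite.subset (Set.Finite.union
    (Set.finite_range fun i : Fin dd => h (lvl (p.1, F i p.1)) (p.1, F i p.1))
    (Set.finite_range fun i : Fin dd => h (lvl (p.2, F i p.2)) (p.2, F i p.2))) ?_
  rintro c (⟨i, _, _, _, h4⟩ | ⟨i, _, _, _, h4⟩)
  · exact Or.inl ⟨i, h4⟩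
  · exact Or.inr ⟨i, h4⟩

lemma compl_nonempty (h : ℕ → V × V → ℕ) (n : ℕ) (p : V × V) :
    {c | c ∉ colSet dd D F lvl h n p}.Nonempty := by
  have : ((colSet dd D F lvl h n p)ᶜ : Set ℕ).Infinite :=
    Set.Finite.infinite_compl (colSet_finite dd D F lvl h n p)
  exact this.nonempty

lemma col_not_mem (n : ℕ) (p : V × V) :
    col dd D F lvl n p ∉ colSet dd D F lvl (col dd D F lvl) n p := by
  have := Nat.sInf_mem (compl_nonempty dd D F lvl (col dd D F lvl) n p)
  rw [← col_eq] at this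
  exact this

lemma col_le {n : ℕ} {p : V × V} {m : ℕ}
    (hm : m ∉ colSet dd D F lvl (col dd D F lvl) n p) : col dd D F lvl n p ≤ m := by
  rw [col_eq]; exact Nat.sInf_le hm

lemma colSet_swap (h : ℕ → V × V → ℕ) (n : ℕ) (x y : V) :
    colSet dd D F lvl h n (x, y) = colSet dd D F lvl h n (y, x) :=
  Set.ext fun _ => or_comm

lemma col_symm (n : ℕ) (x y : V) : col dd D F lvl n (x, y) = col dd D F lvl n (y, x) := by
  rw [col_eq, col_eq, colSet_swap]

lemma nat_sInf_eq_iff {S : Set ℕ} (hS : S.Nonempty) (n : ℕ) :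
    sInf S = n ↔ n ∈ S ∧ ∀ m, m < n → m ∉ S := by
  constructor
  · rintro rfl
    exact ⟨Nat.sInf_mem hS, fun m hm => Nat.notMem_of_lt_sInf hm⟩
  · rintro ⟨h1, h2⟩
    refine le_antisymm (Nat.sInf_le h1) ?_
    by_contra hlt
    exact h2 _ (Nat.lt_of_not_le hlt) (Nat.sInf_mem hS)

lemma measurable_sInf {α : Type*} [MeasurableSpace α] {p : ℕ → α → Prop}
    (hp : ∀ n, MeasurableSet {x | p n x}) (hex : ∀ x, ∃ n, p n x) :
    Measurable fun x => sInf {n | p n x} := by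
  apply measurable_to_countable'
  intro n
  have heq : (fun x => sInf {n | p n x}) ⁻¹' {n} =
      {x | p n x} ∩ ⋂ m, ⋂ (_ : m < n), {x | p m x}ᶜ := by
    ext x
    simp only [mem_preimage, mem_singleton_iff, mem_inter_iff, mem_iInter, mem_compl_iff,
      mem_setOf_eq]
    rw [nat_sInf_eq_iff (show ({n | p n x} : Set ℕ).Nonempty from hex x)]
    simp only [mem_setOf_eq]
  rw [heq]
  exact (hp n).inter (MeasurableSet.iInter fun m => MeasurableSet.iInter fun _ => (hp m).compl)

lemma col_measurable [MeasurableSpace V] (hD : ∀ i, MeasurableSet (D i))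
    (hF : ∀ i, Measurable (F i)) (hlvl : Measurable lvl)
    (hdiag : MeasurableSet {p : V × V | p.1 = p.2}) :
    ∀ n, Measurable (col dd D F lvl n) := by
  intro n
  induction n using Nat.strong_induction_on with
  | _ n ih =>
  have hmem : ∀ c0 : ℕ, MeasurableSet {p | c0 ∈ colSet dd D F lvl (col dd D F lvl) n p} := by
    intro c0
    have heq : {p | c0 ∈ colSet dd D F lvl (col dd D F lvl) n p} =
        (⋃ i, ({p : V × V | p.1 ∈ D i} ∩ {p | (F i p.1, p.2) ∈ {q : V × V | q.1 = q.2}ᶜ} ∩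
          ⋃ m, ⋃ (_ : m < n), ({p : V × V | lvl (p.1, F i p.1) = m} ∩
            {p | col dd D F lvl m (p.1, F i p.1) = c0}))) ∪
        (⋃ i, ({p : V × V | p.2 ∈ D i} ∩ {p | (F i p.2, p.1) ∈ {q : V × V | q.1 = q.2}ᶜ} ∩
          ⋃ m, ⋃ (_ : m < n), ({p : V × V | lvl (p.2, F i p.2) = m} ∩
            {p | col dd D F lvl m (p.2, F i p.2) = c0}))) := by
      ext p
      simp only [colSet, mem_setOf_eq, mem_union, mem_iUnion, mem_inter_iff, mem_compl_iff]
      constructor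
      · rintro (⟨i, h1, h2, h3, h4⟩ | ⟨i, h1, h2, h3, h4⟩)
        · exact Or.inl ⟨i, ⟨h1, h2⟩, _, h3, rfl, h4⟩
        · exact Or.inr ⟨i, ⟨h1, h2⟩, _, h3, rfl, h4⟩
      · rintro (⟨i, ⟨h1, h2⟩, m, h3, h5, h4⟩ | ⟨i, ⟨h1, h2⟩, m, h3, h5, h4⟩)
        · exact Or.inl ⟨i, h1, h2, h5 ▸ h3, by rw [h5]; exact h4⟩
        · exact Or.inr ⟨i, h1, h2, h5 ▸ h3, by rw [h5]; exact h4⟩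
    rw [heq]
    have hei : ∀ i, Measurable fun p : V × V => (p.1, F i p.1) :=
      fun i => measurable_fst.prodMk ((hF i).comp measurable_fst)
    have hei' : ∀ i, Measurable fun p : V × V => (p.2, F i p.2) :=
      fun i => measurable_snd.prodMk ((hF i).comp measurable_snd)
    refine MeasurableSet.union (MeasurableSet.iUnion fun i => ?_)
      (MeasurableSet.iUnion fun i => ?_)
    · refine (((measurable_fst (hD i)).inter
        ((((hF i).comp measurable_fst).prodMk measurable_snd) hdiag.compl)).inter
        (MeasurableSet.iUnion fun m => MeasurableSet.iUnion fun hm => ?_))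
      exact ((hei i) (hlvl (measurableSet_singleton m))).inter
        ((hei i) ((ih m hm) (measurableSet_singleton c0)))
    · refine (((measurable_snd (hD i)).inter
        ((((hF i).comp measurable_snd).prodMk measurable_fst) hdiag.compl)).inter
        (MeasurableSet.iUnion fun m => MeasurableSet.iUnion fun hm => ?_))
      exact ((hei' i) (hlvl (measurableSet_singleton m))).inter
        ((hei' i) ((ih m hm) (measurableSet_singleton c0)))
  apply measurable_to_countable'
  intro c0
  have : (col dd D F lvl n) ⁻¹' {c0} =
      {p | c0 ∉ colSet dd D F lvl (col dd D F lvl) n p} ∩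
      ⋂ m, ⋂ (_ : m < c0), {p | m ∈ colSet dd D F lvl (col dd D F lvl) n p} := by
    ext p
    simp only [mem_preimage, mem_singleton_iff, mem_inter_iff, mem_iInter, mem_setOf_eq]
    rw [col_eq, nat_sInf_eq_iff (compl_nonempty dd D F lvl _ n p)]
    simp only [mem_setOf_eq, not_not]
  rw [this]
  exact ((hmem c0).compl).inter
    (MeasurableSet.iInter fun m => MeasurableSet.iInter fun _ => hmem m)

end BECaux

lemma nbr_decomp {V : Type*} [MeasurableSpace V] [StandardBorelSpace V] [Nonempty V]
    (G : SimpleGraph V) (d : ℕ)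
    (hlf : ∀ x : V, (G.neighborSet x).Finite)
    (hdeg : ∀ x : V, (G.neighborSet x).ncard ≤ d)
    (hE : MeasurableSet {p : V × V | G.Adj p.1 p.2}) :
    ∃ (D : Fin d → Set V) (F : Fin d → V → V),
      (∀ i, MeasurableSet (D i)) ∧ (∀ i, Measurable (F i)) ∧
      (∀ x y, G.Adj x y ↔ ∃ i, x ∈ D i ∧ F i x = y) := by
  classical
  set f : V → ℝ := MeasureTheory.embeddingReal V with hfdef
  have hf : MeasurableEmbedding f := MeasureTheory.measurableEmbedding_embeddingReal V
  set B : Set (V × ℝ) := (Prod.map id f) '' {p : V × V | G.Adj p.1 p.2} with hBdef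
  have hBm : MeasurableSet B :=
    (MeasurableEmbedding.id.prodMap hf).measurableSet_image.2 hE
  have hBsec : ∀ x : V, {t | (x, t) ∈ B} = f '' (G.neighborSet x) := by
    intro x; ext t
    constructor
    · rintro ⟨⟨a, b⟩, hab, heq⟩
      have h1 : a = x := congrArg Prod.fst heq
      have h2 : f b = t := congrArg Prod.snd heq
      exact ⟨b, h1 ▸ hab, h2⟩
    · rintro ⟨y, hy, rfl⟩
      exact ⟨(x, y), hy, rfl⟩
  obtain ⟨D, g, hDm, hgm, hiff⟩ := graph_decomp d B hBm
    (fun x => by rw [hBsec]; exact (hlf x).image f)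
    (fun x => by
      rw [hBsec, Set.ncard_image_of_injective _ hf.injective]; exact hdeg x)
  set finv : ℝ → V := Function.extend f id (fun _ => Classical.arbitrary V) with hfinvdef
  have hfinvm : Measurable finv := hf.measurable_extend measurable_id measurable_const
  have hfinv : ∀ y : V, finv (f y) = y := fun y => hf.injective.extend_apply _ _ y
  refine ⟨D, fun i x => finv (g i x), hDm, fun i => hfinvm.comp (hgm i), ?_⟩
  have hmem : ∀ (i : Fin d) (x : V), x ∈ D i → G.Adj x (finv (g i x)) ∧ f (finv (g i x)) = g i x := by
    intro i x hx
    have : (x, g i x) ∈ B := (hiff x (g i x)).2 ⟨i, hx, rfl⟩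
    obtain ⟨⟨a, b⟩, hab, heq⟩ := this
    have h1 : a = x := congrArg Prod.fst heq
    have h2 : f b = g i x := congrArg Prod.snd heq
    subst h1
    rw [← h2, hfinv]
    exact ⟨hab, h2 ▸ rfl⟩
  intro x y
  constructor
  · intro hadj
    have : (x, f y) ∈ B := ⟨(x, y), hadj, rfl⟩
    obtain ⟨i, hx, hg⟩ := (hiff x (f y)).1 this
    refine ⟨i, hx, ?_⟩
    show finv (g i x) = y
    rw [hg, hfinv]
  · rintro ⟨i, hx, rfl⟩
    exact (hmem i x hx).1

/-- small interval avoiding a finite set -/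
lemma interval_avoid (T : Set ℝ) (hT : T.Finite) (a : ℝ) :
    ∃ q r : ℚ, a ∈ Set.Ioo (q : ℝ) (r : ℝ) ∧
      ∀ t ∈ T, t ≠ a → t ∉ Set.Ioo (q : ℝ) (r : ℝ) := by
  classical
  set s : Finset ℝ := hT.toFinset.filter (· ≠ a) with hsdef
  have hpos : ∀ t ∈ s, 0 < |t - a| := by
    intro t ht
    rw [hsdef, Finset.mem_filter] at ht
    exact abs_pos.2 (sub_ne_zero.2 ht.2)
  obtain ⟨δ, hδpos, hδ⟩ : ∃ δ : ℝ, 0 < δ ∧ ∀ t ∈ s, δ ≤ |t - a| := by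
    rcases Finset.eq_empty_or_nonempty s with hs | hs
    · exact ⟨1, one_pos, by simp [hs]⟩
    · refine ⟨s.inf' hs (fun t => |t - a|), ?_, fun t ht => Finset.inf'_le _ ht⟩
      rw [Finset.lt_inf'_iff]
      exact fun t ht => hpos t ht
  obtain ⟨q, hq1, hq2⟩ := exists_rat_btwn (show a - δ < a by linarith)
  obtain ⟨r, hr1, hr2⟩ := exists_rat_btwn (show a < a + δ by linarith)
  refine ⟨q, r, ⟨hq2, hr1⟩, ?_⟩
  rintro t ht hne ⟨h1, h2⟩
  have hts : t ∈ s := by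
    rw [hsdef, Finset.mem_filter, Set.Finite.mem_toFinset]
    exact ⟨ht, hne⟩
  have h3 := hδ t hts
  have h4 : |t - a| < δ := abs_sub_lt_iff.2 ⟨by linarith, by linarith⟩
  linarith


/-- Every Borel graph with maximum degree at most `d` admits a Borel proper edge
colouring with `2d − 1` colours: a symmetric Borel map on edges, with values
in `{0, …, 2d−2}`, such that any two distinct edges sharing a vertex get different
colours. -/
theorem stmt_15 {V : Type*} [MeasurableSpace V] [StandardBorelSpace V]
    (G : SimpleGraph V) (d : ℕ)
    (hlf : ∀ x : V, (G.neighborSet x).Finite)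
    (hdeg : ∀ x : V, (G.neighborSet x).ncard ≤ d)
    (hE : MeasurableSet {p : V × V | G.Adj p.1 p.2}) :
    ∃ c : V × V → ℕ, Measurable c ∧
      (∀ x y : V, G.Adj x y → c (x, y) < 2 * d - 1) ∧
      (∀ x y : V, G.Adj x y → c (x, y) = c (y, x)) ∧
      (∀ x y z : V, G.Adj x y → G.Adj x z → y ≠ z → c (x, y) ≠ c (x, z)) := by
  classical
  rcases isEmpty_or_nonempty V with hV | hV
  · exact ⟨fun _ => 0, measurable_const, fun x => (IsEmpty.false x).elim,
      fun x => (IsEmpty.false x).elim, fun x => (IsEmpty.false x).elim⟩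
  obtain ⟨D, F, hDm, hFm, hiff⟩ := nbr_decomp G d hlf hdeg hE
  set f : V → ℝ := MeasureTheory.embeddingReal V with hfdef
  have hf : MeasurableEmbedding f := MeasureTheory.measurableEmbedding_embeddingReal V
  have hAdjF : ∀ i x, x ∈ D i → G.Adj x (F i x) := fun i x hx => (hiff x (F i x)).2 ⟨i, hx, rfl⟩
  -- countable basis of rational intervals
  obtain ⟨e, he⟩ : ∃ e : ℕ → ℚ × ℚ, Function.Surjective e := exists_surjective_nat _
  set S : ℕ → Set ℝ := fun n => Set.Ioo ((e n).1 : ℝ) ((e n).2 : ℝ) with hSdef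
  have hSm : ∀ n, MeasurableSet (S n) := fun n => measurableSet_Ioo
  have hSex : ∀ (a : ℝ) (T : Set ℝ), T.Finite → ∃ n, a ∈ S n ∧ ∀ t ∈ T, t ≠ a → t ∉ S n := by
    intro a T hT
    obtain ⟨q, r, h1, h2⟩ := interval_avoid T hT a
    obtain ⟨n, hn⟩ := he (q, r)
    have hSn : S n = Set.Ioo (q : ℝ) (r : ℝ) := by
      rw [hSdef]
      simp only [hn]
    exact ⟨n, hSn ▸ h1, hSn ▸ h2⟩
  -- a countable colouring proper for the distance-≤2 graph
  set Good : ℕ → V → Prop := fun n x =>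
    f x ∈ S n ∧ (∀ i, x ∈ D i → f (F i x) ∉ S n) ∧
      (∀ i j, x ∈ D j → F j x ∈ D i → f (F i (F j x)) ≠ f x → f (F i (F j x)) ∉ S n) with hGood
  have hGoodex : ∀ x, ∃ n, Good n x := by
    intro x
    set T : Set ℝ := ((fun i => f (F i x)) '' {i | x ∈ D i}) ∪
      ((fun q : Fin d × Fin d => f (F q.1 (F q.2 x))) '' {q | x ∈ D q.2 ∧ F q.2 x ∈ D q.1})
      with hTdef
    have hTfin : T.Finite := ((Set.toFinite _).image _).union ((Set.toFinite _).image _)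
    obtain ⟨n, hn1, hn2⟩ := hSex (f x) T hTfin
    refine ⟨n, hn1, ?_, ?_⟩
    · intro i hi
      refine hn2 _ (Or.inl ⟨i, hi, rfl⟩) ?_
      intro h
      exact (hAdjF i x hi).ne' (hf.injective h)
    · intro i j h1 h2 h3
      exact hn2 _ (Or.inr ⟨(i, j), ⟨h1, h2⟩, rfl⟩) h3
  have hGm : ∀ n, MeasurableSet {x | Good n x} := by
    intro n
    have heq : {x | Good n x} = (f ⁻¹' S n) ∩
        (⋂ i, ((D i)ᶜ ∪ (fun x => f (F i x)) ⁻¹' (S n)ᶜ)) ∩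
        (⋂ i, ⋂ j, ((D j)ᶜ ∪ (F j ⁻¹' (D i))ᶜ ∪ {x | f (F i (F j x)) = f x} ∪
          (fun x => f (F i (F j x))) ⁻¹' (S n)ᶜ)) := by
      ext x
      simp only [hGood, mem_setOf_eq, mem_inter_iff, mem_iInter, mem_union, mem_preimage,
        mem_compl_iff]
      constructor
      · rintro ⟨a1, a2, a3⟩
        refine ⟨⟨a1, fun i => ?_⟩, fun i j => ?_⟩
        · by_cases h : x ∈ D i
          · exact Or.inr (a2 i h)
          · exact Or.inl h
        · by_cases h1 : x ∈ D j
          · by_cases h2 : F j x ∈ D i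
            · by_cases h3 : f (F i (F j x)) = f x
              · exact Or.inl (Or.inr h3)
              · exact Or.inr (a3 i j h1 h2 h3)
            · exact Or.inl (Or.inl (Or.inr h2))
          · exact Or.inl (Or.inl (Or.inl h1))
      · rintro ⟨⟨a1, a2⟩, a3⟩
        refine ⟨a1, fun i h => ?_, fun i j h1 h2 h3 => ?_⟩
        · rcases a2 i with h' | h'
          · exact absurd h h'
          · exact h'
        · rcases a3 i j with ((h' | h') | h') | h'
          · exact absurd h1 h'
          · exact absurd h2 h'
          · exact absurd h' h3
          · exact h'
    rw [heq]
    have hfm : Measurable f := hf.measurable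
    refine MeasurableSet.inter (MeasurableSet.inter (hfm (hSm n)) ?_) ?_
    · refine MeasurableSet.iInter fun i => MeasurableSet.union (hDm i).compl ?_
      exact (hfm.comp (hFm i)) (hSm n).compl
    · refine MeasurableSet.iInter fun i => MeasurableSet.iInter fun j => ?_
      refine MeasurableSet.union (MeasurableSet.union (MeasurableSet.union
        (hDm j).compl ((hFm j) (hDm i)).compl) ?_) ((hfm.comp ((hFm i).comp (hFm j))) (hSm n).compl)
      exact measurableSet_eq_fun (hfm.comp ((hFm i).comp (hFm j))) hfm
  set c0 : V → ℕ := fun x => sInf {n | Good n x} with hc0def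
  have hc0good : ∀ x, Good (c0 x) x := fun x => Nat.sInf_mem (hGoodex x)
  have hc0m : Measurable c0 := BECaux.measurable_sInf hGm hGoodex
  have P1 : ∀ x y, G.Adj x y → c0 x ≠ c0 y := by
    intro x y hxy heq
    obtain ⟨i, hx, hFx⟩ := (hiff x y).1 hxy
    have h1 := (hc0good x).2.1 i hx
    rw [hFx, heq] at h1
    exact h1 (hc0good y).1
  have P2 : ∀ x y z, G.Adj x y → G.Adj x z → y ≠ z → c0 y ≠ c0 z := by
    intro x y z hxy hxz hyz heq
    obtain ⟨j, hyD, hFy⟩ := (hiff y x).1 hxy.symm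
    obtain ⟨i, hxD, hFx⟩ := (hiff x z).1 hxz
    rw [← hFy] at hxD hFx
    have h1 := (hc0good y).2.2 i j hyD hxD
    rw [hFx] at h1
    have h2 : f z ≠ f y := fun h => hyz.symm (hf.injective h)
    have h3 := h1 h2
    rw [heq] at h3
    exact h3 (hc0good z).1
  set lvl : V × V → ℕ := fun p => Nat.pair (min (c0 p.1) (c0 p.2)) (max (c0 p.1) (c0 p.2))
    with hlvldef
  have hlvlm : Measurable lvl := by
    have h1 : Measurable fun p : V × V => (c0 p.1, c0 p.2) :=
      (hc0m.comp measurable_fst).prodMk (hc0m.comp measurable_snd)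
    exact (measurable_of_countable (fun q : ℕ × ℕ => Nat.pair (min q.1 q.2) (max q.1 q.2))).comp h1
  have hlvlsym : ∀ x y, lvl (x, y) = lvl (y, x) := by
    intro x y
    simp only [hlvldef, min_comm, max_comm]
  have hlvlne : ∀ x y z, G.Adj x y → G.Adj x z → y ≠ z → lvl (x, y) ≠ lvl (x, z) := by
    intro x y z hxy hxz hyz heq
    simp only [hlvldef] at heq
    have h1 := (Nat.pair_eq_pair.1 heq).1
    have h2 := (Nat.pair_eq_pair.1 heq).2
    have e1 : min (c0 x) (c0 y) + max (c0 x) (c0 y) = c0 x + c0 y := min_add_max _ _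
    have e2 : min (c0 x) (c0 z) + max (c0 x) (c0 z) = c0 x + c0 z := min_add_max _ _
    have : c0 y = c0 z := by omega
    exact P2 x y z hxy hxz hyz this
  have hdiag : MeasurableSet {p : V × V | p.1 = p.2} := by
    have heq : {p : V × V | p.1 = p.2} = {p : V × V | f p.1 = f p.2} := by
      ext p
      exact ⟨fun h => congrArg f h, fun h => hf.injective h⟩
    rw [heq]
    exact measurableSet_eq_fun (hf.measurable.comp measurable_fst)
      (hf.measurable.comp measurable_snd)
  set c : V × V → ℕ := fun p => BECaux.col d D F lvl (lvl p) p with hcdef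
  have hcolm := BECaux.col_measurable d D F lvl hDm hFm hlvlm hdiag
  have hcm : Measurable c := by
    apply measurable_to_countable'
    intro k
    have : c ⁻¹' {k} = ⋃ m, (lvl ⁻¹' {m} ∩ (BECaux.col d D F lvl m) ⁻¹' {k}) := by
      ext p
      simp only [mem_preimage, mem_singleton_iff, hcdef, mem_iUnion, mem_inter_iff]
      constructor
      · intro h
        exact ⟨lvl p, rfl, h⟩
      · rintro ⟨m, hm, h⟩
        rw [hm]
        exact h
    rw [this]
    exact MeasurableSet.iUnion fun m =>
      (hlvlm (measurableSet_singleton m)).inter ((hcolm m) (measurableSet_singleton k))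
  have key : ∀ x y z, G.Adj x y → G.Adj x z → y ≠ z → lvl (x, z) < lvl (x, y) →
      c (x, y) ≠ c (x, z) := by
    intro x y z hxy hxz hyz hlt hcc
    have hnot := BECaux.col_not_mem d D F lvl (lvl (x, y)) (x, y)
    apply hnot
    obtain ⟨i, hxD, hFz⟩ := (hiff x z).1 hxz
    subst hFz
    exact Or.inl ⟨i, hxD, fun h => hyz (h.symm), hlt, hcc.symm⟩
  refine ⟨c, hcm, ?_, ?_, ?_⟩
  · -- bound
    intro x y hxy
    have hd1 : 1 ≤ d := by
      have h0 : 0 < (G.neighborSet x).ncard := (Set.ncard_pos (hlf x)).2 ⟨y, hxy⟩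
      have := hdeg x
      omega
    set U : Set ℕ := ((fun z => c (x, z)) '' (G.neighborSet x \ {y})) ∪
      ((fun z => c (y, z)) '' (G.neighborSet y \ {x})) with hUdef
    have hsub : BECaux.colSet d D F lvl (BECaux.col d D F lvl) (lvl (x, y)) (x, y) ⊆ U := by
      rintro k (⟨i, h1, h2, h3, h4⟩ | ⟨i, h1, h2, h3, h4⟩)
      · exact Or.inl ⟨F i x, ⟨hAdjF i x h1, h2⟩, h4⟩
      · exact Or.inr ⟨F i y, ⟨hAdjF i y h1, h2⟩, h4⟩
    have hfin1 : ((G.neighborSet x) \ {y}).Finite := (hlf x).diff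
    have hfin2 : ((G.neighborSet y) \ {x}).Finite := (hlf y).diff
    have hUfin : U.Finite := (hfin1.image _).union (hfin2.image _)
    have hU1 : ((fun z => c (x, z)) '' (G.neighborSet x \ {y})).ncard ≤ d - 1 := by
      refine le_trans (Set.ncard_image_le hfin1) ?_
      rw [Set.ncard_diff_singleton_of_mem ((G.mem_neighborSet x y).2 hxy)]
      exact Nat.sub_le_sub_right (hdeg x) 1
    have hU2 : ((fun z => c (y, z)) '' (G.neighborSet y \ {x})).ncard ≤ d - 1 := by
      refine le_trans (Set.ncard_image_le hfin2) ?_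
      rw [Set.ncard_diff_singleton_of_mem ((G.mem_neighborSet y x).2 hxy.symm)]
      exact Nat.sub_le_sub_right (hdeg y) 1
    have hUcard : U.ncard ≤ 2 * d - 2 := by
      refine le_trans (Set.ncard_union_le _ _) ?_
      omega
    have hex : ∃ m, m < 2 * d - 1 ∧ m ∉ U := by
      by_contra hcon
      push_neg at hcon
      have hsub2 : (↑(Finset.range (2 * d - 1)) : Set ℕ) ⊆ U := by
        intro m hm
        rw [Finset.coe_range, mem_Iio] at hm
        exact hcon m hm
      have hcard2 := Set.ncard_le_ncard hsub2 hUfin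
      rw [Set.ncard_coe_finset, Finset.card_range] at hcard2
      omega
    obtain ⟨m, hm1, hm2⟩ := hex
    have hle : c (x, y) ≤ m := BECaux.col_le d D F lvl (fun hmem => hm2 (hsub hmem))
    omega
  · -- symmetry
    intro x y _
    show BECaux.col d D F lvl (lvl (x, y)) (x, y) = BECaux.col d D F lvl (lvl (y, x)) (y, x)
    rw [hlvlsym x y, BECaux.col_symm]
  · -- properness
    intro x y z hxy hxz hyz
    rcases lt_trichotomy (lvl (x, z)) (lvl (x, y)) with h | h | h
    · exact key x y z hxy hxz hyz h
    · exact absurd h.symm (hlvlne x y z hxy hxz hyz)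
    · exact fun hcc => (key x z y hxz hxy (Ne.symm hyz) h) hcc.symm
end

section
/- For every irrational α, the irrational rotation graph ℛ_α admits a proper 3-colouring with Borel colour classes; hence its Borel chromatic number equals 3. -/
open Set MeasureTheory

/-- The 3-colouring used for rotation by `γ ∈ (0, 1/2)`. -/
noncomputable def rotCol (γ : ℝ) (x : ℝ) : Fin 3 :=
  if x < 1 - γ then (if ⌊x / γ⌋ % 2 = 0 then 0 else 1) else 2

lemma rotCol_measurable (γ : ℝ) : Measurable (rotCol γ) := by
  unfold rotCol
  apply Measurable.ite (measurableSet_lt measurable_id measurable_const) _ measurable_const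
  have h1 : Measurable fun x : ℝ => ⌊x / γ⌋ := (measurable_id.div_const γ).floor
  exact (measurable_from_top (f := fun n : ℤ => if n % 2 = 0 then (0 : Fin 3) else 1)).comp h1

lemma rotCol_step {γ : ℝ} (h0 : 0 < γ) (h2 : γ < 1/2) {x : ℝ} (hx : x ∈ Set.Ico (0:ℝ) 1) :
    rotCol γ x ≠ rotCol γ (if x + γ < 1 then x + γ else x + γ - 1) := by
  obtain ⟨hx0, hx1⟩ := hx
  by_cases hwrap : x + γ < 1
  · rw [if_pos hwrap]
    by_cases hlast : x + γ < 1 - γ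
    · -- both in the parity region
      have hx' : x < 1 - γ := by linarith
      have hfloor : ⌊(x + γ) / γ⌋ = ⌊x / γ⌋ + 1 := by
        have : (x + γ) / γ = x / γ + 1 := by field_simp
        rw [this, Int.floor_add_one]
      unfold rotCol
      rw [if_pos hx', if_pos hlast, hfloor]
      rcases Int.emod_two_eq ⌊x / γ⌋ with hp | hp
      · rw [if_pos hp, if_neg (by omega)]; decide
      · rw [if_neg (by omega), if_pos (by omega)]; decide
    · -- x in parity region, x + γ in last region
      have hx' : x < 1 - γ := by linarith
      unfold rotCol
      rw [if_pos hx', if_neg hlast]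
      split <;> decide
  · -- wrap-around: x in last region, image near 0
    rw [if_neg hwrap]
    have hx' : ¬ (x < 1 - γ) := by linarith
    have hy : x + γ - 1 < 1 - γ := by linarith
    unfold rotCol
    rw [if_neg hx', if_pos hy]
    split <;> decide

lemma dense_zsmul_addCircle {a : ℝ} (ha : Irrational a) :
    DenseRange (fun n : ℤ => n • (↑a : AddCircle (1:ℝ))) := by
  set S : AddSubgroup ℝ := AddSubgroup.closure {a, 1} with hS
  have hSdense : Dense (S : Set ℝ) := by
    rcases S.dense_or_cyclic with h | ⟨b, hb⟩
    · exact h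
    · exfalso
      have haS : a ∈ S := AddSubgroup.subset_closure (by simp)
      have h1S : (1:ℝ) ∈ S := AddSubgroup.subset_closure (by simp)
      rw [hb] at haS h1S
      obtain ⟨m, hm⟩ := AddSubgroup.mem_closure_singleton.mp haS
      obtain ⟨n, hn⟩ := AddSubgroup.mem_closure_singleton.mp h1S
      simp only [zsmul_eq_mul] at hm hn
      have hn0 : (n : ℝ) ≠ 0 := by
        intro h; rw [h, zero_mul] at hn; exact one_ne_zero hn.symm
      have hb' : b = 1 / n := by field_simp at hn ⊢; linarith [hn]
      apply ha
      exact ⟨(m : ℚ) / (n : ℚ), by push_cast; rw [← hm, hb']; field_simp⟩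
  -- push density down to the circle
  set q := QuotientAddGroup.mk' (AddSubgroup.zmultiples (1:ℝ)) with hq
  have hmk : DenseRange (⇑q) := (QuotientAddGroup.mk'_surjective _).denseRange
  have himg : Dense (⇑q '' S) := hmk.dense_image (AddCircle.continuous_mk' 1) hSdense
  have hle : S ≤ AddSubgroup.comap q (AddSubgroup.zmultiples ((↑a : AddCircle (1:ℝ)))) := by
    rw [hS]
    refine (AddSubgroup.closure_le _).2 ?_
    rintro y (rfl | rfl)
    · exact AddSubgroup.mem_comap.2 (AddSubgroup.mem_zmultiples _)
    · refine AddSubgroup.mem_comap.2 ?_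
      have h1 : q (1:ℝ) = 0 := by
        rw [QuotientAddGroup.mk'_apply]
        exact AddCircle.coe_period 1
      rw [h1]; exact zero_mem _
  have hsub : (⇑q '' S) ⊆ Set.range (fun n : ℤ => n • (↑a : AddCircle (1:ℝ))) := by
    rintro - ⟨x, hxS, rfl⟩
    obtain ⟨k, hk⟩ := hle hxS
    exact ⟨k, hk⟩
  exact himg.mono hsub

/-- For every irrational `α`, the irrational rotation graph `ℛ_α` on `[0,1)` admits a
proper 3-colouring with Borel colour classes, but no proper 2-colouring with Borel
colour classes; hence its Borel chromatic number equals 3. -/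
theorem stmt_19 (α : ℝ) (hα : Irrational α) :
    (∃ c : ℝ → Fin 3, Measurable c ∧
      ∀ x ∈ Set.Ico (0 : ℝ) 1, c x ≠ c (Int.fract (x + α))) ∧
    ¬ ∃ c : ℝ → Fin 2, Measurable c ∧
      ∀ x ∈ Set.Ico (0 : ℝ) 1, c x ≠ c (Int.fract (x + α)) := by
  set β : ℝ := Int.fract α with hβ
  have hβirr : Irrational β := hα.sub_intCast ⌊α⌋
  have hβ0 : 0 < β := by
    rcases lt_or_eq_of_le (Int.fract_nonneg α) with h | h
    · exact h
    · exact absurd ⟨0, by exact_mod_cast h⟩ hβirr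
  have hβ1 : β < 1 := Int.fract_lt_one α
  have hβhalf : β ≠ 1/2 := fun h => hβirr ⟨1/2, by rw [h]; norm_num⟩
  have hβdef : β = α - ⌊α⌋ := rfl
  have hfract : ∀ x : ℝ, Int.fract (x + α) = Int.fract (x + β) := by
    intro x
    have h1 : x + β = x + α - ((⌊α⌋ : ℤ) : ℝ) := by rw [hβdef]; push_cast; ring
    rw [h1, Int.fract_sub_intCast]
  have hfract' : ∀ x ∈ Set.Ico (0:ℝ) 1,
      Int.fract (x + β) = if x + β < 1 then x + β else x + β - 1 := by
    rintro x ⟨hx0, hx1⟩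
    by_cases h : x + β < 1
    · rw [if_pos h, Int.fract_eq_self.2 ⟨by linarith, h⟩]
    · rw [if_neg h]
      have : Int.fract (x + β) = Int.fract (x + β - 1) := by
        have h1 : x + β - 1 = (x + β) - ((1:ℤ) : ℝ) := by push_cast; ring
        rw [h1, Int.fract_sub_intCast]
      rw [this, Int.fract_eq_self.2 ⟨by linarith, by linarith⟩]
  constructor
  · -- existence of measurable 3-colouring
    set γ : ℝ := if β < 1/2 then β else 1 - β with hγ
    have hγ0 : 0 < γ := by
      rw [hγ]; split <;> linarith
    have hγhalf : γ < 1/2 := by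
      rw [hγ]; split
      · assumption
      · rcases lt_or_gt_of_ne hβhalf with h | h
        · exact absurd h (by assumption)
        · linarith
    refine ⟨rotCol γ, rotCol_measurable γ, fun x hx => ?_⟩
    rw [hfract x, hfract' x hx]
    by_cases hcase : β < 1/2
    · have : γ = β := if_pos hcase
      rw [← this]
      exact rotCol_step hγ0 hγhalf hx
    · have hγβ : γ = 1 - β := if_neg hcase
      obtain ⟨hx0, hx1⟩ := hx
      set y : ℝ := if x + β < 1 then x + β else x + β - 1 with hy
      have hymem : y ∈ Set.Ico (0:ℝ) 1 := by
        rw [hy]; split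
        · constructor <;> [linarith; assumption]
        · push_neg at *
          constructor <;> [linarith; linarith]
      have hxy : x = if y + γ < 1 then y + γ else y + γ - 1 := by
        rw [hy, hγβ]
        by_cases h : x + β < 1
        · rw [if_pos h, if_neg (by push_neg; linarith)]; ring
        · rw [if_neg h, if_pos (by push_neg at h; linarith)]; ring
      have := rotCol_step hγ0 hγhalf hymem
      rw [← hxy] at this
      exact this.symm
  · -- no measurable 2-colouring
    rintro ⟨c, hc, hprop⟩
    -- transfer to the circle
    haveI : Fact ((0:ℝ) < 1) := ⟨one_pos⟩
    set lift : AddCircle (1:ℝ) → ℝ := fun z => ((AddCircle.equivIco 1 0 z : Ico (0:ℝ) (0+1)) : ℝ)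
      with hlift
    have hliftmeas : Measurable lift :=
      measurable_subtype_coe.comp (AddCircle.measurableEquivIco 1 0).measurable
    have hliftmem : ∀ z, lift z ∈ Set.Ico (0:ℝ) 1 := by
      intro z
      obtain ⟨h1, h2⟩ := (AddCircle.equivIco 1 0 z).2
      exact ⟨h1, by linarith⟩
    have hliftcoe : ∀ z : AddCircle (1:ℝ), ((lift z : ℝ) : AddCircle (1:ℝ)) = z := by
      intro z
      exact (AddCircle.equivIco 1 0).symm_apply_apply z
    have hliftmk : ∀ r : ℝ, lift ((r : ℝ) : AddCircle (1:ℝ)) = Int.fract r := by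
      intro r
      rw [hlift]
      simp [AddCircle.coe_equivIco_mk_apply]
    set f : AddCircle (1:ℝ) → Fin 2 := fun z => c (lift z) with hf
    have hfmeas : Measurable f := hc.comp hliftmeas
    have hstep : ∀ z : AddCircle (1:ℝ), f ((β : ℝ) + z) ≠ f z := by
      intro z
      have h1 : ((β : ℝ) : AddCircle (1:ℝ)) + z = ((lift z + β : ℝ) : AddCircle (1:ℝ)) := by
        conv_lhs => rw [← hliftcoe z]
        rw [← AddCircle.coe_add, add_comm]
      rw [hf]
      simp only
      rw [h1, hliftmk]
      have := hprop (lift z) (hliftmem z)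
      rw [hfract (lift z)] at this
      exact this.symm
    set S : Set (AddCircle (1:ℝ)) := f ⁻¹' {0} with hSdef
    have hSmeas : MeasurableSet S := hfmeas (measurableSet_singleton 0)
    have hpre : (fun z => ((β:ℝ) : AddCircle (1:ℝ)) + z) ⁻¹' S = Sᶜ := by
      ext z
      simp only [hSdef, Set.mem_preimage, Set.mem_singleton_iff, Set.mem_compl_iff]
      constructor
      · intro h h'
        exact hstep z (by rw [h, h'])
      · intro h
        have hkey : ∀ a b : Fin 2, a ≠ b → b ≠ 0 → a = 0 := by decide
        exact hkey _ _ (hstep z) h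
    have hinv : (fun z => ((β + β : ℝ) : AddCircle (1:ℝ)) + z) ⁻¹' S = S := by
      have hcomp : (fun z => ((β + β : ℝ) : AddCircle (1:ℝ)) + z)
          = (fun z => ((β:ℝ) : AddCircle (1:ℝ)) + z) ∘ (fun z => ((β:ℝ) : AddCircle (1:ℝ)) + z) := by
        funext z
        simp [AddCircle.coe_add, add_assoc]
      rw [hcomp, Set.preimage_comp, hpre, Set.preimage_compl, hpre, compl_compl]
    have h2βirr : Irrational (β + β) := by
      have : Irrational ((2:ℚ) * β) := hβirr.ratCast_mul (by norm_num)
      simpa [two_mul] using this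
    have herg : Ergodic (fun z : AddCircle (1:ℝ) => ((β + β : ℝ) : AddCircle (1:ℝ)) + z) volume :=
      ergodic_add_left_of_denseRange_zsmul (dense_zsmul_addCircle h2βirr) volume
    have hmp : MeasurePreserving (fun z : AddCircle (1:ℝ) => ((β:ℝ) : AddCircle (1:ℝ)) + z)
        volume volume := measurePreserving_add_left volume _
    have hSc : volume Sᶜ = volume S := by
      rw [← hpre]
      exact hmp.measure_preimage hSmeas.nullMeasurableSet
    have huniv : volume (Set.univ : Set (AddCircle (1:ℝ))) = 1 := by
      rw [AddCircle.measure_univ]; simp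
    have hsum : volume S + volume Sᶜ = 1 := by
      rw [measure_add_measure_compl hSmeas, huniv]
    rcases herg.ae_empty_or_univ hSmeas hinv with h | h
    · have h0 : volume S = 0 := by rwa [ae_eq_empty] at h
      rw [h0, hSc, h0] at hsum
      simp at hsum
    · have h0 : volume Sᶜ = 0 := by rwa [ae_eq_univ] at h
      have h0' : volume S = 0 := by rw [← hSc]; exact h0
      rw [h0, h0'] at hsum
      simp at hsum
end
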